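/- arXiv:1208.3325 — 4 statements merged into one kernel-verified Lean document; each statement's English description precedes it below -/
import Mathlib

section
/- For every r > 0 and every (t,φ) ∈ [0,1] × (0,π), one has 1/2 ≤ F_r(t,φ) ≤ t^r + 1 ≤ 2. -/
open MeasureTheory Real Set Filter

noncomputable section

/-- `kappa m` is the volume `κ_m = π^{m/2}/Γ(m/2+1)` of the `m`-dimensional unit ball. -/
def kappa (m : ℕ) : ℝ := Real.pi ^ ((m : ℝ) / 2) / Real.Gamma ((m : ℝ) / 2 + 1)

/-- `omegaC m` is the surface area `ω_m = 2π^{m/2}/Γ(m/2)` of the unit sphere `S^{m-1}`. -/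
def omegaC (m : ℕ) : ℝ := 2 * Real.pi ^ ((m : ℝ) / 2) / Real.Gamma ((m : ℝ) / 2)

/-- `bn2 n = ω_{n-1} ω_n / (4π)`. -/
def bn2 (n : ℕ) : ℝ := omegaC (n - 1) * omegaC n / (4 * Real.pi)

/-- The `j`-th standard basis vector of `ℝ^m` (or `0` if `j ≥ m`). -/
def eVec (m j : ℕ) : EuclideanSpace ℝ (Fin m) :=
  if h : j < m then EuclideanSpace.single ⟨j, h⟩ (1 : ℝ) else 0

/-- `cC m s = c(m,s) = ∫_{S^{m-1}} ⟨e,u⟩₊^s dH^{m-1}(u)` for the fixed unit vector `e = e₁`. -/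
def cC (m : ℕ) (s : ℝ) : ℝ :=
  ∫ u in Metric.sphere (0 : EuclideanSpace ℝ (Fin m)) 1,
    max ((inner ℝ (eVec m 0) u : ℝ)) 0 ^ s ∂(μH[(m : ℝ) - 1])

/-- `c2 s = c(2,s) = ∫_{-π/2}^{π/2} (cos θ)^s dθ`. -/
def c2 (s : ℝ) : ℝ := ∫ θ in (-(Real.pi / 2))..(Real.pi / 2), Real.cos θ ^ s

/-- The hyperplane `H(u,t) = {x ∈ ℝⁿ : ⟨x,u⟩ = t}`. -/
def hyp (n : ℕ) (u : EuclideanSpace ℝ (Fin n)) (t : ℝ) : Set (EuclideanSpace ℝ (Fin n)) :=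
  {x | (inner ℝ x u : ℝ) = t}

/-- `innerInt n r K = ∫_{S^{n-1}} ∫_0^∞ 1{H(u,t) ∩ K ≠ ∅} t^{r-1} dt dH^{n-1}(u)`. -/
def innerInt (n : ℕ) (r : ℝ) (K : Set (EuclideanSpace ℝ (Fin n))) : ℝ :=
  ∫ u in Metric.sphere (0 : EuclideanSpace ℝ (Fin n)) 1,
    (∫ t in Set.Ioi (0 : ℝ),
      Set.indicator {t : ℝ | (hyp n u t ∩ K).Nonempty} (fun t => t ^ (r - 1)) t)
    ∂(μH[(n : ℝ) - 1])

/-- `momentI n k r γ = I_k(n,r,γ)`, the `k`-th moment of the volume of the zero cell. -/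
def momentI (n k : ℕ) (r γ : ℝ) : ℝ :=
  ∫ x : Fin k → EuclideanSpace ℝ (Fin n),
    Real.exp (-(2 * γ / ((n : ℝ) * kappa n)) *
      innerInt n r (convexHull ℝ (insert 0 (Set.range x))))

/-- `VarF n r γ = Var(n,r,γ) = I_2 - I_1²`, the variance of the volume of the zero cell. -/
def VarF (n : ℕ) (r γ : ℝ) : ℝ := momentI n 2 r γ - (momentI n 1 r γ) ^ 2

/-- `alphaF t φ = α(t,φ) = arctan((t - cos φ)/ sin φ)`. -/
def alphaF (t φ : ℝ) : ℝ := Real.arctan ((t - Real.cos φ) / Real.sin φ)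

/-- The auxiliary function `F_r(t,φ)`. -/
def Fr (r t φ : ℝ) : ℝ :=
  (1 / c2 r) * (t ^ r * (∫ θ in (-(Real.pi / 2))..(alphaF t φ), Real.cos θ ^ r)
    + ∫ θ in (alphaF t φ - φ)..(Real.pi / 2), Real.cos θ ^ r)

/-- The planar line `L(θ,t) = {x ∈ ℝ² : x₁ cos θ + x₂ sin θ = t}`. -/
def lineL (θ t : ℝ) : Set (ℝ × ℝ) := {x | x.1 * Real.cos θ + x.2 * Real.sin θ = t}

/-- `planarInt r K = ∫_0^{2π} ∫_0^∞ 1{L(θ,t) ∩ K ≠ ∅} t^{r-1} dt dθ`. -/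
def planarInt (r : ℝ) (K : Set (ℝ × ℝ)) : ℝ :=
  ∫ θ in (0 : ℝ)..(2 * Real.pi),
    ∫ t in Set.Ioi (0 : ℝ),
      Set.indicator {t : ℝ | (lineL θ t ∩ K).Nonempty} (fun t => t ^ (r - 1)) t

/-- The auxiliary quantity `D(n,r,γ)`. -/
def Dconst (n : ℕ) (r γ : ℝ) : ℝ :=
  (n : ℝ) * kappa n ^ 2 / r * Real.Gamma (2 * (n : ℝ) / r + 1) *
    ((n : ℝ) * kappa n * r / (4 * γ * cC n r)) ^ (2 * (n : ℝ) / r)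

/-- The auxiliary quantity `E(n,r)`. -/
def Econst (n : ℕ) (r : ℝ) : ℝ :=
  ((n : ℝ) / c2 ((n : ℝ) - 2)) *
    ∫ φ in (0 : ℝ)..Real.pi, (Real.sin φ) ^ (n - 2) *
      ∫ t in (0 : ℝ)..1, t ^ (n - 1) * (1 + t ^ r - Fr r t φ)

/-- `Mfun v r = M(v,r) = (1/c(2,r)) ∫_v^{π/2} (cos θ)^r dθ`. -/
def Mfun (v r : ℝ) : ℝ := (1 / c2 r) * ∫ θ in v..(Real.pi / 2), Real.cos θ ^ r

/-- `Aconst r = A(r) = π^{(r+1)/2}/(e Γ((r+1)/2))`. -/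
def Aconst (r : ℝ) : ℝ := Real.pi ^ ((r + 1) / 2) / (Real.exp 1 * Real.Gamma ((r + 1) / 2))

/-- `Bconst a = B(a) = 2πe(a+1)^{(a+1)/a}/a`. -/
def Bconst (a : ℝ) : ℝ := 2 * Real.pi * Real.exp 1 * (a + 1) ^ ((a + 1) / a) / a

/-- The intensity `γ̂(a,n)` normalizing the expected volume of the zero cell to `1/λ`. -/
def gammaHat (a lam : ℝ) (n : ℕ) : ℝ :=
  a * (n : ℝ) ^ 2 * kappa n / (2 * cC n (a * n)) *
    (lam * Real.Gamma (1 / a + 1) * kappa n) ^ a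

/-- The embedding of `ℝ²` onto `span{e₁,e₂} ⊆ ℝⁿ`. -/
def emb (n : ℕ) (q : ℝ × ℝ) : EuclideanSpace ℝ (Fin n) :=
  q.1 • eVec n 0 + q.2 • eVec n 1

/-- `para2 n x y = ∇₂(x,y)`, the area of the parallelogram spanned by `x` and `y`. -/
def para2 (n : ℕ) (x y : EuclideanSpace ℝ (Fin n)) : ℝ :=
  Real.sqrt (‖x‖ ^ 2 * ‖y‖ ^ 2 - (inner ℝ x y : ℝ) ^ 2)

end

/-- for every `r > 0` and `(t,φ) ∈ [0,1] × (0,π)`,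
`1/2 ≤ F_r(t,φ) ≤ t^r + 1 ≤ 2`. -/
theorem statement5 (r : ℝ) (hr : 0 < r) (t φ : ℝ) (ht : t ∈ Set.Icc (0 : ℝ) 1)
    (hφ : φ ∈ Set.Ioo (0 : ℝ) Real.pi) :
    1 / 2 ≤ Fr r t φ ∧ Fr r t φ ≤ t ^ r + 1 ∧ t ^ r + 1 ≤ 2 := by
  obtain ⟨ht0, ht1⟩ := ht
  obtain ⟨hφ0, hφπ⟩ := hφ
  have hπ := Real.pi_pos
  have hsin : 0 < Real.sin φ := Real.sin_pos_of_pos_of_lt_pi hφ0 hφπ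
  set f : ℝ → ℝ := fun θ => Real.cos θ ^ r with hfdef
  have hfc : Continuous f := by
    rw [continuous_iff_continuousAt]
    intro x
    exact (Real.continuousAt_rpow_const _ r (Or.inr hr.le)).comp Real.continuous_cos.continuousAt
  have hI : ∀ u v : ℝ, IntervalIntegrable f volume u v := fun u v =>
    hfc.intervalIntegrable u v
  have hfnn : ∀ x ∈ Set.Icc (-(Real.pi/2)) (Real.pi/2), 0 ≤ f x := fun x hx =>
    Real.rpow_nonneg (Real.cos_nonneg_of_mem_Icc (by simpa using hx)) r
  set a := alphaF t φ with ha
  have ha1 : a < Real.pi / 2 := Real.arctan_lt_pi_div_two _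
  have ha2 : -(Real.pi / 2) < a := Real.neg_pi_div_two_lt_arctan _
  have haφ : a ≤ φ := by
    rcases le_or_gt (Real.pi/2) φ with h | h
    · exact ha1.le.trans h
    · have hcos : 0 < Real.cos φ := Real.cos_pos_of_mem_Ioo ⟨by linarith, h⟩
      have hle : (t - Real.cos φ) / Real.sin φ ≤ Real.tan φ := by
        rw [Real.tan_eq_sin_div_cos, div_le_div_iff₀ hsin hcos]
        nlinarith [Real.sin_sq_add_cos_sq φ]
      calc a = Real.arctan ((t - Real.cos φ)/Real.sin φ) := rfl
        _ ≤ Real.arctan (Real.tan φ) := Real.arctan_strictMono.monotone hle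
        _ = φ := Real.arctan_tan (by linarith) h
  have haφ2 : -(Real.pi/2) ≤ a - φ := by
    have htan : Real.tan (φ - Real.pi/2) = -Real.cos φ / Real.sin φ := by
      rw [Real.tan_eq_sin_div_cos, Real.sin_sub, Real.cos_sub]
      simp
    have hle : Real.tan (φ - Real.pi/2) ≤ (t - Real.cos φ) / Real.sin φ := by
      rw [htan, div_le_div_iff₀ hsin hsin]
      nlinarith
    have h1 : φ - Real.pi/2 ≤ a := by
      calc φ - Real.pi/2 = Real.arctan (Real.tan (φ - Real.pi/2)) :=
            (Real.arctan_tan (by linarith) (by linarith)).symm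
        _ ≤ a := Real.arctan_strictMono.monotone hle
    linarith
  set c := c2 r with hc
  have hcI : c = ∫ θ in (-(Real.pi/2))..(Real.pi/2), f θ := rfl
  have hcpos : 0 < c := by
    rw [hcI]
    apply intervalIntegral.intervalIntegral_pos_of_pos_on (hI _ _)
    · intro x hx
      exact Real.rpow_pos_of_pos (Real.cos_pos_of_mem_Ioo ⟨hx.1, hx.2⟩) r
    · linarith
  -- symmetry: ∫_{-π/2}^0 f = ∫_0^{π/2} f
  have hsym : (∫ x in (-(Real.pi/2))..(0:ℝ), f x) = ∫ x in (0:ℝ)..(Real.pi/2), f x := by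
    have h := intervalIntegral.integral_comp_neg (a := (0:ℝ)) (b := Real.pi/2) f
    have h2 : (∫ x in (0:ℝ)..(Real.pi/2), f (-x)) = ∫ x in (0:ℝ)..(Real.pi/2), f x := by
      apply intervalIntegral.integral_congr
      intro x _
      simp [hfdef, Real.cos_neg]
    rw [h2] at h
    simpa using h.symm
  have hhalf : (∫ x in (0:ℝ)..(Real.pi/2), f x) = c / 2 := by
    have hsplit : c = (∫ x in (-(Real.pi/2))..(0:ℝ), f x) + ∫ x in (0:ℝ)..(Real.pi/2), f x := by
      rw [hcI, intervalIntegral.integral_add_adjacent_intervals (hI _ _) (hI _ _)]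
    rw [hsym] at hsplit
    linarith
  set I1 := ∫ θ in (-(Real.pi/2))..a, f θ with hI1
  set I2 := ∫ θ in (a - φ)..(Real.pi/2), f θ with hI2
  have nonneg_on : ∀ u v : ℝ, -(Real.pi/2) ≤ u → u ≤ v → v ≤ Real.pi/2 →
      0 ≤ ∫ x in u..v, f x := by
    intro u v h1 h2 h3
    apply intervalIntegral.integral_nonneg h2
    intro x hx
    exact hfnn x ⟨le_trans h1 hx.1, le_trans hx.2 h3⟩
  have hI1nn : 0 ≤ I1 := nonneg_on _ _ le_rfl ha2.le ha1.le
  have hI2ge : c / 2 ≤ I2 := by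
    have hsplit : I2 = (∫ x in (a-φ)..(0:ℝ), f x) + ∫ x in (0:ℝ)..(Real.pi/2), f x := by
      rw [hI2, intervalIntegral.integral_add_adjacent_intervals (hI _ _) (hI _ _)]
    have h0 : 0 ≤ ∫ x in (a-φ)..(0:ℝ), f x := nonneg_on _ _ haφ2 (by linarith) (by linarith)
    rw [hsplit, hhalf]
    linarith
  have hI1le : I1 ≤ c := by
    have hsplit : c = I1 + ∫ x in a..(Real.pi/2), f x := by
      rw [hcI, intervalIntegral.integral_add_adjacent_intervals (hI _ _) (hI _ _)]
    have h0 : 0 ≤ ∫ x in a..(Real.pi/2), f x := nonneg_on _ _ ha2.le ha1.le le_rfl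
    linarith
  have hI2le : I2 ≤ c := by
    have hsplit : c = (∫ x in (-(Real.pi/2))..(a-φ), f x) + I2 := by
      rw [hcI, intervalIntegral.integral_add_adjacent_intervals (hI _ _) (hI _ _)]
    have h0 : 0 ≤ ∫ x in (-(Real.pi/2))..(a-φ), f x :=
      nonneg_on _ _ le_rfl haφ2 (by linarith)
    linarith
  have htr0 : 0 ≤ t ^ r := Real.rpow_nonneg ht0 r
  have htr1 : t ^ r ≤ 1 := Real.rpow_le_one ht0 ht1 hr.le
  have hFr : Fr r t φ = (t ^ r * I1 + I2) / c := by
    rw [Fr]; ring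
  refine ⟨?_, ?_, by linarith⟩
  · rw [hFr, le_div_iff₀ hcpos]
    nlinarith
  · rw [hFr, div_le_iff₀ hcpos]
    nlinarith
end

section
/- For all reals u, s with 0 < u ≤ s and all φ ∈ (0,π), ∫_0^{2π} ∫_0^∞ 1{L(θ,t) ∩ conv{(0,0), s(cos φ, sin φ), (u, 0)} ≠ ∅} t^{r−1} dt dθ = (s^r c(2,r)/r) F_r(u/s, φ), where L(θ,t) := {x ∈ ℝ² : x_1 cos θ + x_2 sin θ = t}. -/
open MeasureTheory Real Set Filter

section auxlem

open Real

lemma convexHull_triple (a b c : ℝ) :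
    convexHull ℝ ({a, b, c} : Set ℝ) = Set.Icc (min a (min b c)) (max a (max b c)) := by
  have hsub : ({a, b, c} : Set ℝ) ⊆ Set.Icc (min a (min b c)) (max a (max b c)) := by
    intro x hx
    simp only [Set.mem_insert_iff, Set.mem_singleton_iff] at hx
    rcases hx with rfl | rfl | rfl
    · exact ⟨min_le_left _ _, le_max_left _ _⟩
    · exact ⟨le_trans (min_le_right _ _) (min_le_left _ _),
        le_trans (le_max_left _ _) (le_max_right _ _)⟩
    · exact ⟨le_trans (min_le_right _ _) (min_le_right _ _),
        le_trans (le_max_right _ _) (le_max_right _ _)⟩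
  refine Set.Subset.antisymm (convexHull_min hsub (convex_Icc _ _)) ?_
  have hmm : min a (min b c) ∈ ({a, b, c} : Set ℝ) := by
    rcases min_cases a (min b c) with ⟨h, -⟩ | ⟨h, -⟩
    · rw [h]; simp
    · rcases min_cases b c with ⟨h2, -⟩ | ⟨h2, -⟩ <;> rw [h, h2] <;> simp
  have hMM : max a (max b c) ∈ ({a, b, c} : Set ℝ) := by
    rcases max_cases a (max b c) with ⟨h, -⟩ | ⟨h, -⟩
    · rw [h]; simp
    · rcases max_cases b c with ⟨h2, -⟩ | ⟨h2, -⟩ <;> rw [h, h2] <;> simp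
  have hle : min a (min b c) ≤ max a (max b c) :=
    le_trans (min_le_left _ _) (le_max_left _ _)
  rw [← segment_eq_Icc hle]
  exact segment_subset_convexHull hmm hMM

lemma inner_eval {r : ℝ} (hr : 0 < r) (u s φ θ : ℝ) :
    (∫ t in Set.Ioi (0 : ℝ),
      Set.indicator {t : ℝ | (lineL θ t ∩
          convexHull ℝ {((0 : ℝ), (0 : ℝ)), (s * Real.cos φ, s * Real.sin φ), (u, 0)}).Nonempty}
        (fun t => t ^ (r - 1)) t)
    = (max 0 (max (s * Real.cos (θ - φ)) (u * Real.cos θ))) ^ r / r := by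
  set f : ℝ × ℝ → ℝ := fun x => x.1 * Real.cos θ + x.2 * Real.sin θ with hf
  have hlin : IsLinearMap ℝ f := by
    constructor
    · intro x y; simp only [hf, Prod.fst_add, Prod.snd_add]; ring
    · intro c x; simp only [hf, Prod.smul_fst, Prod.smul_snd, smul_eq_mul]; ring
  have e1 : f ((0 : ℝ), (0 : ℝ)) = 0 := by simp [hf]
  have e2 : f (s * Real.cos φ, s * Real.sin φ) = s * Real.cos (θ - φ) := by
    simp only [hf]; rw [Real.cos_sub]; ring
  have e3 : f (u, 0) = u * Real.cos θ := by simp [hf]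
  have himg : f '' convexHull ℝ {((0 : ℝ), (0 : ℝ)), (s * Real.cos φ, s * Real.sin φ), (u, 0)}
      = convexHull ℝ {(0 : ℝ), s * Real.cos (θ - φ), u * Real.cos θ} := by
    rw [hlin.image_convexHull, Set.image_insert_eq, Set.image_insert_eq, Set.image_singleton,
      e1, e2, e3]
  set m : ℝ := min 0 (min (s * Real.cos (θ - φ)) (u * Real.cos θ)) with hm
  set M : ℝ := max 0 (max (s * Real.cos (θ - φ)) (u * Real.cos θ)) with hM
  have hset : {t : ℝ | (lineL θ t ∩
      convexHull ℝ {((0 : ℝ), (0 : ℝ)), (s * Real.cos φ, s * Real.sin φ), (u, 0)}).Nonempty}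
      = Set.Icc m M := by
    rw [hm, hM, ← convexHull_triple, ← himg]
    ext t
    simp only [Set.mem_setOf_eq, Set.mem_image, lineL]
    constructor
    · rintro ⟨x, hxl, hxK⟩
      exact ⟨x, hxK, hxl⟩
    · rintro ⟨x, hxK, hxt⟩
      exact ⟨x, hxt, hxK⟩
  have hm0 : m ≤ 0 := min_le_left _ _
  have hM0 : (0 : ℝ) ≤ M := le_max_left _ _
  have hIcc : Set.Ioi (0 : ℝ) ∩ Set.Icc m M = Set.Ioc 0 M := by
    ext x
    simp only [Set.mem_inter_iff, Set.mem_Ioi, Set.mem_Icc, Set.mem_Ioc]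
    constructor
    · rintro ⟨h1, _, h3⟩; exact ⟨h1, h3⟩
    · rintro ⟨h1, h2⟩; exact ⟨h1, le_trans hm0 h1.le, h2⟩
  rw [hset, MeasureTheory.setIntegral_indicator measurableSet_Icc, hIcc,
    ← intervalIntegral.integral_of_le hM0,
    integral_rpow (Or.inl (by linarith : (-1 : ℝ) < r - 1))]
  have hr1 : r - 1 + 1 = r := by ring
  rw [hr1, Real.zero_rpow hr.ne']
  ring

end auxlem

/-- the explicit evaluation of the planar integral via `F_r`. -/
theorem statement9 (r : ℝ) (hr : 0 < r) (u s : ℝ) (hu : 0 < u) (hus : u ≤ s)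
    (φ : ℝ) (hφ : φ ∈ Set.Ioo (0 : ℝ) Real.pi) :
    planarInt r (convexHull ℝ {(0, 0), (s * Real.cos φ, s * Real.sin φ), (u, 0)}) =
      s ^ r * c2 r / r * Fr r (u / s) φ := by
  obtain ⟨hφ1, hφ2⟩ := hφ
  have hs : 0 < s := lt_of_lt_of_le hu hus
  have hsφ : 0 < Real.sin φ := Real.sin_pos_of_pos_of_lt_pi hφ1 hφ2
  have hπ : 0 < Real.pi := Real.pi_pos
  set A := Real.arctan ((u / s - Real.cos φ) / Real.sin φ) with hA
  have hA1 : -(Real.pi / 2) < A := Real.neg_pi_div_two_lt_arctan _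
  have hA2 : A < Real.pi / 2 := Real.arctan_lt_pi_div_two _
  have hA3 : φ - Real.pi / 2 < A := by
    have h1 : Real.arctan (Real.tan (φ - Real.pi / 2)) = φ - Real.pi / 2 :=
      Real.arctan_tan (by linarith) (by linarith)
    have h2 : Real.tan (φ - Real.pi / 2) = (0 - Real.cos φ) / Real.sin φ := by
      rw [Real.tan_eq_sin_div_cos, Real.sin_sub, Real.cos_sub]
      simp
    have hlt : (0 - Real.cos φ) / Real.sin φ < (u / s - Real.cos φ) / Real.sin φ := by
      rw [div_lt_div_iff₀ hsφ hsφ]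
      nlinarith [div_pos hu hs]
    calc φ - Real.pi / 2 = Real.arctan ((0 - Real.cos φ) / Real.sin φ) := by rw [← h2, h1]
      _ < A := by rw [hA]; exact Real.arctan_strictMono hlt
  -- key comparison on region 1
  have key1 : ∀ θ, -(Real.pi / 2) ≤ θ → θ ≤ A → s * Real.cos (θ - φ) ≤ u * Real.cos θ := by
    intro θ h1 h2
    rcases eq_or_lt_of_le h1 with h1e | h1'
    · have hcθ : Real.cos θ = 0 := by rw [← h1e]; simp
      have hcθφ : Real.cos (θ - φ) = -Real.sin φ := by
        rw [← h1e, Real.cos_sub]; simp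
      rw [hcθ, hcθφ]; nlinarith
    · have hcos : 0 < Real.cos θ := Real.cos_pos_of_mem_Ioo ⟨h1', lt_of_le_of_lt h2 hA2⟩
      have htan : Real.tan θ ≤ Real.tan A :=
        Real.strictMonoOn_tan.monotoneOn ⟨h1', lt_of_le_of_lt h2 hA2⟩ ⟨hA1, hA2⟩ h2
      rw [hA, Real.tan_arctan, Real.tan_eq_sin_div_cos] at htan
      have hx : Real.sin θ * Real.sin φ ≤ (u / s - Real.cos φ) * Real.cos θ := by
        rw [div_le_div_iff₀ hcos hsφ] at htan; linarith
      have husx : s * (u / s) = u := by field_simp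
      rw [Real.cos_sub]
      nlinarith [mul_le_mul_of_nonneg_left hx hs.le]
  -- key comparison on region 2
  have key2b : ∀ θ, A ≤ θ → θ ≤ φ + Real.pi / 2 → 0 ≤ Real.cos (θ - φ) := by
    intro θ h1 h2
    exact Real.cos_nonneg_of_mem_Icc ⟨by linarith, by linarith⟩
  have key2 : ∀ θ, A ≤ θ → θ ≤ φ + Real.pi / 2 → u * Real.cos θ ≤ s * Real.cos (θ - φ) := by
    intro θ h1 h2
    rcases le_or_gt (Real.pi / 2) θ with hge | hlt
    · have hc : Real.cos θ ≤ 0 := Real.cos_nonpos_of_pi_div_two_le_of_le hge (by linarith)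
      have hc2 : 0 ≤ Real.cos (θ - φ) := key2b θ h1 h2
      nlinarith
    · have hcos : 0 < Real.cos θ := Real.cos_pos_of_mem_Ioo ⟨by linarith, hlt⟩
      have htan : Real.tan A ≤ Real.tan θ :=
        Real.strictMonoOn_tan.monotoneOn ⟨hA1, hA2⟩ ⟨by linarith, hlt⟩ h1
      rw [hA, Real.tan_arctan, Real.tan_eq_sin_div_cos] at htan
      have hx : (u / s - Real.cos φ) * Real.cos θ ≤ Real.sin θ * Real.sin φ := by
        rw [div_le_div_iff₀ hsφ hcos] at htan; linarith
      have husx : s * (u / s) = u := by field_simp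
      rw [Real.cos_sub]
      nlinarith [mul_le_mul_of_nonneg_left hx hs.le]
  -- continuity facts
  have hcosr : Continuous fun θ : ℝ => Real.cos θ ^ r :=
    (Real.continuous_rpow_const hr.le).comp Real.continuous_cos
  set g : ℝ → ℝ := fun θ => (max 0 (max (s * Real.cos (θ - φ)) (u * Real.cos θ))) ^ r with hg
  have hgcont : Continuous g := by
    apply (Real.continuous_rpow_const hr.le).comp
    exact continuous_const.max
      ((continuous_const.mul (Real.continuous_cos.comp (continuous_sub_right φ))).max
        (continuous_const.mul Real.continuous_cos))
  have hi : ∀ a b : ℝ, IntervalIntegrable g MeasureTheory.volume a b := fun a b =>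
    hgcont.intervalIntegrable a b
  have hc2pos : 0 < c2 r := by
    unfold c2
    apply intervalIntegral.intervalIntegral_pos_of_pos_on (hcosr.intervalIntegrable _ _)
    · intro x hx
      exact Real.rpow_pos_of_pos (Real.cos_pos_of_mem_Ioo hx) r
    · linarith
  -- rewrite the inner integral
  unfold planarInt
  rw [intervalIntegral.integral_congr
    (g := fun θ => (max 0 (max (s * Real.cos (θ - φ)) (u * Real.cos θ))) ^ r / r)
    (fun θ _ => inner_eval hr u s φ θ)]
  rw [intervalIntegral.integral_div]
  -- shift by periodicity
  have hper : Function.Periodic g (2 * Real.pi) := by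
    intro x
    simp only [hg]
    rw [show x + 2 * Real.pi - φ = (x - φ) + 2 * Real.pi by ring, Real.cos_add_two_pi,
      Real.cos_add_two_pi]
  have hshift := hper.intervalIntegral_add_eq 0 (-(Real.pi / 2))
  rw [zero_add] at hshift
  rw [show (∫ θ in (0 : ℝ)..(2 * Real.pi),
      (max 0 (max (s * Real.cos (θ - φ)) (u * Real.cos θ))) ^ r) =
      ∫ θ in (0 : ℝ)..(2 * Real.pi), g θ from rfl, hshift]
  -- split into three pieces
  rw [← intervalIntegral.integral_add_adjacent_intervals (hi (-(Real.pi / 2)) A)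
      (hi A (-(Real.pi / 2) + 2 * Real.pi)),
    ← intervalIntegral.integral_add_adjacent_intervals (hi A (φ + Real.pi / 2))
      (hi (φ + Real.pi / 2) (-(Real.pi / 2) + 2 * Real.pi))]
  -- piece 1
  have h1 : (∫ θ in (-(Real.pi / 2))..A, g θ)
      = u ^ r * ∫ θ in (-(Real.pi / 2))..A, Real.cos θ ^ r := by
    rw [← intervalIntegral.integral_const_mul]
    apply intervalIntegral.integral_congr
    intro θ hθ
    rw [Set.uIcc_of_le (by linarith : -(Real.pi / 2) ≤ A)] at hθ
    obtain ⟨hθ1, hθ2⟩ := hθ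
    have hc : 0 ≤ Real.cos θ := Real.cos_nonneg_of_mem_Icc ⟨hθ1, by linarith⟩
    have hmax : max 0 (max (s * Real.cos (θ - φ)) (u * Real.cos θ)) = u * Real.cos θ := by
      rw [max_eq_right (key1 θ hθ1 hθ2), max_eq_right (mul_nonneg hu.le hc)]
    simp only [hg]
    rw [hmax, Real.mul_rpow hu.le hc]
  -- piece 2
  have h2 : (∫ θ in A..(φ + Real.pi / 2), g θ)
      = s ^ r * ∫ θ in (A - φ)..(Real.pi / 2), Real.cos θ ^ r := by
    have hcg : (∫ θ in A..(φ + Real.pi / 2), g θ)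
        = ∫ θ in A..(φ + Real.pi / 2), s ^ r * Real.cos (θ - φ) ^ r := by
      apply intervalIntegral.integral_congr
      intro θ hθ
      rw [Set.uIcc_of_le (by linarith : A ≤ φ + Real.pi / 2)] at hθ
      obtain ⟨hθ1, hθ2⟩ := hθ
      have hc : 0 ≤ Real.cos (θ - φ) := key2b θ hθ1 hθ2
      have hmax : max 0 (max (s * Real.cos (θ - φ)) (u * Real.cos θ)) = s * Real.cos (θ - φ) := by
        rw [max_eq_left (key2 θ hθ1 hθ2), max_eq_right (mul_nonneg hs.le hc)]
      simp only [hg]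
      rw [hmax, Real.mul_rpow hs.le hc]
    rw [hcg, intervalIntegral.integral_const_mul]
    congr 1
    have hsub := intervalIntegral.integral_comp_sub_right (a := A) (b := φ + Real.pi / 2)
      (fun x => Real.cos x ^ r) φ
    rw [hsub, show φ + Real.pi / 2 - φ = Real.pi / 2 by ring]
  -- piece 3
  have h3 : (∫ θ in (φ + Real.pi / 2)..(-(Real.pi / 2) + 2 * Real.pi), g θ) = 0 := by
    have heq : Set.EqOn g (fun _ => 0)
        (Set.uIcc (φ + Real.pi / 2) (-(Real.pi / 2) + 2 * Real.pi)) := by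
      intro θ hθ
      rw [Set.uIcc_of_le (by linarith)] at hθ
      obtain ⟨hθ1, hθ2⟩ := hθ
      have hc1 : Real.cos θ ≤ 0 :=
        Real.cos_nonpos_of_pi_div_two_le_of_le (by linarith) (by linarith)
      have hc2 : Real.cos (θ - φ) ≤ 0 :=
        Real.cos_nonpos_of_pi_div_two_le_of_le (by linarith) (by linarith)
      have hmax : max 0 (max (s * Real.cos (θ - φ)) (u * Real.cos θ)) = 0 := by
        rw [max_eq_left]
        apply max_le <;> nlinarith
      simp only [hg]
      rw [hmax, Real.zero_rpow hr.ne']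
    rw [intervalIntegral.integral_congr heq]
    simp
  rw [h1, h2, h3, add_zero]
  -- final algebra
  unfold Fr alphaF
  rw [← hA, Real.div_rpow hu.le hs.le]
  have hsr : (0 : ℝ) < s ^ r := Real.rpow_pos_of_pos hs r
  field_simp
end

section
/- For every real r > 0 there exists a constant c_r > 0, depending on r but not on n, such that for all integers n ≥ 2 one has c_r ≤ E(n,r) ≤ 3/2; one may take c_r = M(π/4, r)/(2(1+r)), where M(v,r) := (1/c(2,r)) ∫_v^{π/2} (cos θ)^r dθ. -/
open MeasureTheory Real Set Filter

namespace Stmt12Aux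

open intervalIntegral

lemma cont_cosr {s : ℝ} (hs : 0 ≤ s) : Continuous fun θ : ℝ => Real.cos θ ^ s :=
  (Real.continuous_rpow_const hs).comp Real.continuous_cos

lemma ii_cosr {s : ℝ} (hs : 0 ≤ s) (a b : ℝ) :
    IntervalIntegrable (fun θ => Real.cos θ ^ s) volume a b :=
  (cont_cosr hs).intervalIntegrable a b

lemma cosr_nonneg {s θ : ℝ} (h1 : -(Real.pi/2) ≤ θ) (h2 : θ ≤ Real.pi/2) :
    0 ≤ Real.cos θ ^ s :=
  Real.rpow_nonneg (Real.cos_nonneg_of_mem_Icc ⟨by linarith, h2⟩) s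

lemma int_cosr_nonneg {s : ℝ} (a b : ℝ) (ha : -(Real.pi/2) ≤ a) (hb : b ≤ Real.pi/2)
    (hab : a ≤ b) : 0 ≤ ∫ θ in a..b, Real.cos θ ^ s := by
  apply intervalIntegral.integral_nonneg hab
  intro x hx
  exact cosr_nonneg (by linarith [hx.1]) (by linarith [hx.2])

lemma c2_pos {s : ℝ} (hs : 0 ≤ s) : 0 < c2 s := by
  have hpi := Real.pi_pos
  apply intervalIntegral_pos_of_pos_on (ii_cosr hs _ _)
  · intro x hx
    exact Real.rpow_pos_of_pos (Real.cos_pos_of_mem_Ioo ⟨hx.1, hx.2⟩) s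
  · linarith

lemma int_split {s : ℝ} (hs : 0 ≤ s) (a b c : ℝ) :
    (∫ θ in a..b, Real.cos θ ^ s) + ∫ θ in b..c, Real.cos θ ^ s
      = ∫ θ in a..c, Real.cos θ ^ s :=
  intervalIntegral.integral_add_adjacent_intervals (ii_cosr hs a b) (ii_cosr hs b c)

lemma Mfun_nonneg {s v : ℝ} (hs : 0 ≤ s) (hv1 : -(Real.pi/2) ≤ v) (hv2 : v ≤ Real.pi/2) :
    0 ≤ Mfun v s := by
  have := int_cosr_nonneg (s := s) v (Real.pi/2) hv1 le_rfl hv2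
  have hc := c2_pos hs
  unfold Mfun
  positivity

lemma Mfun_mono {s a b : ℝ} (hs : 0 ≤ s) (ha : -(Real.pi/2) ≤ a) (hab : a ≤ b)
    (hb : b ≤ Real.pi/2) : Mfun b s ≤ Mfun a s := by
  have hc := c2_pos hs
  have hsplit := int_split hs a b (Real.pi/2)
  have h0 := int_cosr_nonneg (s := s) a b ha hb hab
  unfold Mfun
  have : (∫ θ in b..Real.pi/2, Real.cos θ ^ s) ≤ ∫ θ in a..Real.pi/2, Real.cos θ ^ s := by
    linarith
  have h1c : 0 < 1 / c2 s := by positivity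
  nlinarith

lemma Mfun_pos {s : ℝ} (hs : 0 ≤ s) : 0 < Mfun (Real.pi/4) s := by
  have hpi := Real.pi_pos
  have hc := c2_pos hs
  have hpos : 0 < ∫ θ in (Real.pi/4)..(Real.pi/2), Real.cos θ ^ s := by
    apply intervalIntegral_pos_of_pos_on (ii_cosr hs _ _)
    · intro x hx
      exact Real.rpow_pos_of_pos (Real.cos_pos_of_mem_Ioo ⟨by linarith [hx.1], hx.2⟩) s
    · linarith
  unfold Mfun
  positivity

lemma alpha_lt : ∀ t φ : ℝ, alphaF t φ < Real.pi/2 := fun _ _ => Real.arctan_lt_pi_div_two _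

lemma alpha_gt : ∀ t φ : ℝ, -(Real.pi/2) < alphaF t φ := fun _ _ => Real.neg_pi_div_two_lt_arctan _

lemma alpha_sub_ge {t φ : ℝ} (ht : 0 ≤ t) (hφ1 : 0 < φ) (hφ2 : φ < Real.pi) :
    -(Real.pi/2) ≤ alphaF t φ - φ := by
  have hsin : 0 < Real.sin φ := Real.sin_pos_of_pos_of_lt_pi hφ1 hφ2
  have hkey : φ - Real.pi/2 ≤ alphaF t φ := by
    have htan : Real.tan (φ - Real.pi/2) = (0 - Real.cos φ) / Real.sin φ := by
      rw [Real.tan_eq_sin_div_cos, Real.sin_sub_pi_div_two, Real.cos_sub_pi_div_two]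
      ring_nf
    have harc : Real.arctan (Real.tan (φ - Real.pi/2)) = φ - Real.pi/2 :=
      Real.arctan_tan (by linarith) (by linarith [Real.pi_pos])
    rw [← harc, htan]
    unfold alphaF
    apply Real.arctan_strictMono.monotone
    exact (div_le_div_iff_of_pos_right hsin).mpr (by linarith)
  linarith

lemma alpha_le_pi4 {t φ : ℝ} (ht : t ≤ 1) (hφ1 : 0 < φ) (hφ2 : φ ≤ Real.pi/2) :
    alphaF t φ ≤ Real.pi/4 := by
  have hsin : 0 < Real.sin φ := Real.sin_pos_of_pos_of_lt_pi hφ1 (by linarith [Real.pi_pos])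
  have hcos : 0 ≤ Real.cos φ := Real.cos_nonneg_of_mem_Icc ⟨by linarith, hφ2⟩
  have hsin1 : Real.sin φ ≤ 1 := Real.sin_le_one φ
  have hcos1 : Real.cos φ ≤ 1 := Real.cos_le_one φ
  have hsum : 1 ≤ Real.cos φ + Real.sin φ := by
    nlinarith [Real.sin_sq_add_cos_sq φ]
  have : (t - Real.cos φ) / Real.sin φ ≤ 1 := by
    rw [div_le_one hsin]; linarith
  calc alphaF t φ ≤ Real.arctan 1 := Real.arctan_strictMono.monotone this
  _ = Real.pi/4 := Real.arctan_one

lemma Fr_ge {r t φ : ℝ} (hr : 0 < r) (ht0 : 0 ≤ t) (ht1 : t ≤ 1)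
    (hφ1 : 0 < φ) (hφ2 : φ < Real.pi) : t ^ r ≤ Fr r t φ := by
  have hc := c2_pos hr.le
  set α := alphaF t φ with hα
  have hα1 : -(Real.pi/2) < α := alpha_gt t φ
  have hα2 : α < Real.pi/2 := alpha_lt t φ
  have hαφ : -(Real.pi/2) ≤ α - φ := alpha_sub_ge ht0 hφ1 hφ2
  have htr0 : 0 ≤ t ^ r := Real.rpow_nonneg ht0 r
  have htr1 : t ^ r ≤ 1 := Real.rpow_le_one ht0 ht1 hr.le
  have hsplit1 := int_split (s := r) hr.le (-(Real.pi/2)) α (Real.pi/2)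
  have hsplit2 := int_split (s := r) hr.le (α - φ) α (Real.pi/2)
  have hA0 : 0 ≤ ∫ θ in (-(Real.pi/2))..α, Real.cos θ ^ r :=
    int_cosr_nonneg _ _ le_rfl hα2.le hα1.le
  have hmid : 0 ≤ ∫ θ in (α-φ)..α, Real.cos θ ^ r :=
    int_cosr_nonneg _ _ hαφ hα2.le (by linarith)
  have htop : 0 ≤ ∫ θ in α..(Real.pi/2), Real.cos θ ^ r :=
    int_cosr_nonneg _ _ hα1.le le_rfl hα2.le
  have hFr : Fr r t φ = (1 / c2 r) * (t ^ r * (∫ θ in (-(Real.pi/2))..α, Real.cos θ ^ r)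
      + ∫ θ in (α - φ)..(Real.pi/2), Real.cos θ ^ r) := rfl
  have hc2def : c2 r = ∫ θ in (-(Real.pi/2))..(Real.pi/2), Real.cos θ ^ r := rfl
  have key : t ^ r * c2 r ≤ t ^ r * (∫ θ in (-(Real.pi/2))..α, Real.cos θ ^ r)
      + ∫ θ in (α - φ)..(Real.pi/2), Real.cos θ ^ r := by nlinarith
  rw [hFr]
  calc t ^ r = (1 / c2 r) * (t ^ r * c2 r) := by field_simp
  _ ≤ _ := by
      apply mul_le_mul_of_nonneg_left key
      positivity

lemma g_ge {r t φ : ℝ} (hr : 0 < r) (ht0 : 0 ≤ t)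
    (hφ1 : 0 < φ) (hφ2 : φ < Real.pi) :
    t ^ r * Mfun (alphaF t φ) r ≤ 1 + t ^ r - Fr r t φ := by
  have hc := c2_pos hr.le
  set α := alphaF t φ with hα
  have hα1 : -(Real.pi/2) < α := alpha_gt t φ
  have hα2 : α < Real.pi/2 := alpha_lt t φ
  have hαφ : -(Real.pi/2) ≤ α - φ := alpha_sub_ge ht0 hφ1 hφ2
  have htr0 : 0 ≤ t ^ r := Real.rpow_nonneg ht0 r
  have hsplit1 := int_split (s := r) hr.le (-(Real.pi/2)) α (Real.pi/2)
  have hsplit3 := int_split (s := r) hr.le (-(Real.pi/2)) (α - φ) (Real.pi/2)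
  have hbot : 0 ≤ ∫ θ in (-(Real.pi/2))..(α-φ), Real.cos θ ^ r :=
    int_cosr_nonneg _ _ le_rfl (by linarith) hαφ
  have hFr : Fr r t φ = (1 / c2 r) * (t ^ r * (∫ θ in (-(Real.pi/2))..α, Real.cos θ ^ r)
      + ∫ θ in (α - φ)..(Real.pi/2), Real.cos θ ^ r) := rfl
  have hM : Mfun α r = (1 / c2 r) * ∫ θ in α..(Real.pi/2), Real.cos θ ^ r := rfl
  have hc2def : c2 r = ∫ θ in (-(Real.pi/2))..(Real.pi/2), Real.cos θ ^ r := rfl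
  have e1 : c2 r - (∫ θ in (-(Real.pi/2))..α, Real.cos θ ^ r)
      - (∫ θ in α..(Real.pi/2), Real.cos θ ^ r) = 0 := by rw [hc2def]; linarith
  have e2 : c2 r - (∫ θ in (-(Real.pi/2))..(α-φ), Real.cos θ ^ r)
      - (∫ θ in (α-φ)..(Real.pi/2), Real.cos θ ^ r) = 0 := by rw [hc2def]; linarith
  have hcF : c2 r * Fr r t φ = t ^ r * (∫ θ in (-(Real.pi/2))..α, Real.cos θ ^ r)
      + ∫ θ in (α - φ)..(Real.pi/2), Real.cos θ ^ r := by rw [hFr]; field_simp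
  have hcM : c2 r * Mfun α r = ∫ θ in α..(Real.pi/2), Real.cos θ ^ r := by
    rw [hM]; field_simp
  have key : c2 r * (1 + t ^ r - Fr r t φ - t ^ r * Mfun α r)
      = ∫ θ in (-(Real.pi/2))..(α-φ), Real.cos θ ^ r := by
    have expand : c2 r * (1 + t ^ r - Fr r t φ - t ^ r * Mfun α r)
        = c2 r + c2 r * t ^ r - c2 r * Fr r t φ - t ^ r * (c2 r * Mfun α r) := by ring
    rw [expand, hcF, hcM]
    linear_combination (t ^ r) * e1 + e2
  have final : 1 + t ^ r - Fr r t φ - t ^ r * Mfun α r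
      = (∫ θ in (-(Real.pi/2))..(α-φ), Real.cos θ ^ r) / c2 r := by
    rw [← key]; field_simp
  have : 0 ≤ 1 + t ^ r - Fr r t φ - t ^ r * Mfun α r := by rw [final]; positivity
  linarith

lemma cont_G {r : ℝ} (hr : 0 ≤ r) :
    Continuous fun x : ℝ => ∫ θ in (-(Real.pi/2))..x, Real.cos θ ^ r :=
  intervalIntegral.continuous_primitive (fun _ _ => ii_cosr hr _ _) _

lemma cont_G2 {r : ℝ} (hr : 0 ≤ r) :
    Continuous fun x : ℝ => ∫ θ in x..(Real.pi/2), Real.cos θ ^ r := by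
  have h : (fun x : ℝ => ∫ θ in x..(Real.pi/2), Real.cos θ ^ r)
      = fun x : ℝ => -∫ θ in (Real.pi/2)..x, Real.cos θ ^ r := by
    funext x; rw [intervalIntegral.integral_symm]
  rw [h]
  exact (intervalIntegral.continuous_primitive (fun _ _ => ii_cosr hr _ _) _).neg

lemma cont_integrand {r : ℝ} (hr : 0 < r) {X : Type*} [TopologicalSpace X] {φf : X → ℝ}
    (hφf : Continuous φf) (hne : ∀ x, Real.sin (φf x) ≠ 0) (m : ℕ) :
    Continuous fun p : X × ℝ => p.2 ^ m * (1 + p.2 ^ r - Fr r p.2 (φf p.1)) := by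
  have hα : Continuous fun p : X × ℝ => alphaF p.2 (φf p.1) := by
    unfold alphaF
    exact Real.continuous_arctan.comp
      ((continuous_snd.sub ((Real.continuous_cos.comp hφf).comp continuous_fst)).div
        ((Real.continuous_sin.comp hφf).comp continuous_fst) fun p => hne p.1)
  have htr : Continuous fun p : X × ℝ => p.2 ^ r :=
    (Real.continuous_rpow_const hr.le).comp continuous_snd
  have hFr : Continuous fun p : X × ℝ => Fr r p.2 (φf p.1) := by
    unfold Fr
    exact continuous_const.mul ((htr.mul ((cont_G hr.le).comp hα)).add
      ((cont_G2 hr.le).comp (hα.sub (hφf.comp continuous_fst))))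
  exact (continuous_snd.pow m).mul ((continuous_const.add htr).sub hFr)

lemma cont_t {r : ℝ} (hr : 0 < r) {φ : ℝ} (hφ : Real.sin φ ≠ 0) (m : ℕ) :
    Continuous fun t : ℝ => t ^ m * (1 + t ^ r - Fr r t φ) :=
  (cont_integrand hr (X := Unit) continuous_const (fun _ => hφ) m).comp
    (show Continuous fun t : ℝ => ((() : Unit), t) from continuous_const.prodMk continuous_id)

noncomputable def Jf (r : ℝ) (n : ℕ) (φ : ℝ) : ℝ :=
  ∫ t in (0:ℝ)..1, t ^ (n-1) * (1 + t ^ r - Fr r t φ)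

lemma J_nonneg {r : ℝ} (hr : 0 < r) (n : ℕ) {φ : ℝ} (hφ1 : 0 < φ) (hφ2 : φ < Real.pi) :
    0 ≤ Jf r n φ := by
  apply intervalIntegral.integral_nonneg zero_le_one
  intro t ht
  have hg := g_ge hr ht.1 hφ1 hφ2
  have hM : 0 ≤ Mfun (alphaF t φ) r :=
    Mfun_nonneg hr.le (alpha_gt t φ).le (alpha_lt t φ).le
  have htr0 : 0 ≤ t ^ r := Real.rpow_nonneg ht.1 r
  have h1 : 0 ≤ t ^ (n-1) := pow_nonneg ht.1 _
  exact mul_nonneg h1 (le_trans (mul_nonneg htr0 hM) hg)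

lemma J_le {r : ℝ} (hr : 0 < r) {n : ℕ} (hn : 1 ≤ n) {φ : ℝ} (hφ1 : 0 < φ)
    (hφ2 : φ < Real.pi) : Jf r n φ ≤ 1 / (n : ℝ) := by
  have hsin : Real.sin φ ≠ 0 := ne_of_gt (Real.sin_pos_of_pos_of_lt_pi hφ1 hφ2)
  have h1 : Jf r n φ ≤ ∫ t in (0:ℝ)..1, t ^ (n-1) := by
    apply intervalIntegral.integral_mono_on zero_le_one
      ((cont_t hr hsin _).intervalIntegrable _ _)
      ((continuous_pow _).intervalIntegrable _ _)
    intro t ht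
    have hFr := Fr_ge hr ht.1 ht.2 hφ1 hφ2
    have h1 : 0 ≤ t ^ (n-1) := pow_nonneg ht.1 _
    nlinarith
  have h2 : ∫ t in (0:ℝ)..1, t ^ (n-1) = 1 / (n:ℝ) := by
    rw [integral_pow, one_pow, zero_pow (by omega : n - 1 + 1 ≠ 0), Nat.cast_sub hn]
    push_cast
    ring_nf
  linarith

lemma J_ge {r : ℝ} (hr : 0 < r) {n : ℕ} (hn : 2 ≤ n) {φ : ℝ} (hφ1 : 0 < φ)
    (hφ2 : φ ≤ Real.pi/2) :
    Mfun (Real.pi/4) r * (1 / ((n : ℝ) + r)) ≤ Jf r n φ := by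
  have hpi := Real.pi_pos
  have hφπ : φ < Real.pi := by linarith
  have hsin : Real.sin φ ≠ 0 := ne_of_gt (Real.sin_pos_of_pos_of_lt_pi hφ1 hφπ)
  have hM4 : 0 ≤ Mfun (Real.pi/4) r := (Mfun_pos hr.le).le
  have hn2 : (2:ℝ) ≤ (n:ℝ) := by exact_mod_cast hn
  have hcastn : ((n:ℝ) - 1) = ((n - 1 : ℕ) : ℝ) := by
    rw [Nat.cast_sub (by omega)]; norm_num
  have h1 : ∫ t in (0:ℝ)..1, Mfun (Real.pi/4) r * t ^ (((n:ℝ) - 1) + r) ≤ Jf r n φ := by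
    apply intervalIntegral.integral_mono_on zero_le_one
      ((continuous_const.mul (Real.continuous_rpow_const (by linarith))).intervalIntegrable _ _)
      ((cont_t hr hsin _).intervalIntegrable _ _)
    intro t ht
    show Mfun (Real.pi/4) r * t ^ (((n:ℝ) - 1) + r) ≤ t ^ (n-1) * (1 + t ^ r - Fr r t φ)
    have hg := g_ge hr ht.1 hφ1 hφπ
    have hMa : Mfun (Real.pi/4) r ≤ Mfun (alphaF t φ) r :=
      Mfun_mono hr.le (alpha_gt t φ).le (alpha_le_pi4 ht.2 hφ1 hφ2) (by linarith)
    rcases eq_or_lt_of_le ht.1 with h0 | h0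
    · rw [← h0, Real.zero_rpow (ne_of_gt (by linarith) : ((n:ℝ) - 1) + r ≠ 0),
        zero_pow (by omega : n - 1 ≠ 0)]
      simp
    · have htpow : t ^ (((n:ℝ) - 1) + r) = t ^ (n-1) * t ^ r := by
        rw [hcastn, Real.rpow_add h0, Real.rpow_natCast]
      rw [htpow]
      have htr0 : 0 ≤ t ^ r := Real.rpow_nonneg ht.1 r
      have h1 : 0 ≤ t ^ (n-1) := pow_nonneg ht.1 _
      calc Mfun (Real.pi/4) r * (t ^ (n-1) * t ^ r)
          = t ^ (n-1) * (t ^ r * Mfun (Real.pi/4) r) := by ring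
      _ ≤ t ^ (n-1) * (t ^ r * Mfun (alphaF t φ) r) :=
          mul_le_mul_of_nonneg_left (mul_le_mul_of_nonneg_left hMa htr0) h1
      _ ≤ t ^ (n-1) * (1 + t ^ r - Fr r t φ) := mul_le_mul_of_nonneg_left hg h1
  have h2 : ∫ t in (0:ℝ)..1, Mfun (Real.pi/4) r * t ^ (((n:ℝ) - 1) + r)
      = Mfun (Real.pi/4) r * (1 / ((n:ℝ) + r)) := by
    rw [intervalIntegral.integral_const_mul, integral_rpow (Or.inl (by linarith)),
      Real.one_rpow, Real.zero_rpow (ne_of_gt (by linarith) : ((n:ℝ) - 1) + r + 1 ≠ 0)]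
    ring_nf
  linarith

lemma ae_Ioo (a b : ℝ) : ∀ᵐ x ∂(volume.restrict (Set.Icc a b)), x ∈ Set.Ioo a b := by
  rw [MeasureTheory.ae_restrict_iff' measurableSet_Icc, MeasureTheory.ae_iff]
  have hz : volume ({a, b} : Set ℝ) = 0 := ((Set.finite_singleton b).insert a).measure_zero _
  apply measure_mono_null ?_ hz
  intro x hx
  simp only [Set.mem_setOf_eq, Set.mem_Icc, Set.mem_Ioo, not_forall, not_and, not_lt] at hx
  obtain ⟨hx1, hx2⟩ := hx
  simp only [Set.mem_insert_iff, Set.mem_singleton_iff]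
  rcases eq_or_lt_of_le hx1.1 with h | h
  · exact Or.inl h.symm
  · exact Or.inr (le_antisymm hx1.2 (hx2 h))

lemma sin_pow_int (k : ℕ) :
    ∫ φ in (0:ℝ)..Real.pi, Real.sin φ ^ k = c2 (k:ℝ) := by
  have h1 : c2 (k:ℝ) = ∫ θ in (-(Real.pi/2))..(Real.pi/2), Real.cos θ ^ k := by
    unfold c2
    simp only [Real.rpow_natCast]
  rw [h1]
  have h2 : ∀ θ : ℝ, Real.cos θ ^ k = Real.sin (θ + Real.pi/2) ^ k := by
    intro θ; rw [Real.sin_add_pi_div_two]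
  simp only [h2]
  have h3 := intervalIntegral.integral_comp_add_right (a := -(Real.pi/2)) (b := Real.pi/2)
      (fun x => Real.sin x ^ k) (Real.pi/2)
  rw [h3]
  norm_num

lemma sin_pow_half (k : ℕ) :
    ∫ φ in (0:ℝ)..(Real.pi/2), Real.sin φ ^ k = c2 (k:ℝ) / 2 := by
  have hsplit : (∫ φ in (0:ℝ)..(Real.pi/2), Real.sin φ ^ k)
      + ∫ φ in (Real.pi/2)..Real.pi, Real.sin φ ^ k
      = ∫ φ in (0:ℝ)..Real.pi, Real.sin φ ^ k :=
    intervalIntegral.integral_add_adjacent_intervals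
      ((Real.continuous_sin.pow k).intervalIntegrable _ _)
      ((Real.continuous_sin.pow k).intervalIntegrable _ _)
  have hrefl : ∫ φ in (Real.pi/2)..Real.pi, Real.sin φ ^ k
      = ∫ φ in (0:ℝ)..(Real.pi/2), Real.sin φ ^ k := by
    have h := intervalIntegral.integral_comp_sub_left (a := (0:ℝ)) (b := Real.pi/2)
      (fun x => Real.sin x ^ k) Real.pi
    simp only [Real.sin_pi_sub] at h
    have e1 : Real.pi - Real.pi/2 = Real.pi/2 := by ring
    have e2 : Real.pi - 0 = Real.pi := by ring
    rw [e1, e2] at h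
    exact h.symm
  rw [sin_pow_int k] at hsplit
  rw [hrefl] at hsplit
  linarith

lemma Jf_contOn {r : ℝ} (hr : 0 < r) (n : ℕ) :
    ContinuousOn (Jf r n) (Set.Ioo 0 Real.pi) := by
  rw [continuousOn_iff_continuous_restrict]
  have hc := cont_integrand hr (X := (Set.Ioo (0:ℝ) Real.pi))
    continuous_subtype_val
    (fun x => ne_of_gt (Real.sin_pos_of_pos_of_lt_pi x.2.1 x.2.2)) (n-1)
  exact intervalIntegral.continuous_parametric_intervalIntegral_of_continuous' (μ := volume)
    (f := fun (x : Set.Ioo (0:ℝ) Real.pi) (t : ℝ) => t ^ (n-1) * (1 + t ^ r - Fr r t x.val))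
    hc 0 1

lemma outer_ii {r : ℝ} (hr : 0 < r) {n : ℕ} (hn : 2 ≤ n) (k : ℕ) :
    IntervalIntegrable (fun φ => Real.sin φ ^ k * Jf r n φ) volume 0 Real.pi := by
  have hpi := Real.pi_pos
  rw [intervalIntegrable_iff_integrableOn_Ioo_of_le hpi.le]
  have hcont : ContinuousOn (fun φ => Real.sin φ ^ k * Jf r n φ) (Set.Ioo 0 Real.pi) :=
    ((Real.continuous_sin.pow k).continuousOn).mul (Jf_contOn hr n)
  have hfin : IsFiniteMeasure (volume.restrict (Set.Ioo (0:ℝ) Real.pi)) :=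
    ⟨by rw [MeasureTheory.Measure.restrict_apply_univ]; exact measure_Ioo_lt_top⟩
  refine ⟨hcont.aestronglyMeasurable measurableSet_Ioo,
    MeasureTheory.HasFiniteIntegral.of_bounded (C := 1) ?_⟩
  · filter_upwards [MeasureTheory.ae_restrict_mem measurableSet_Ioo] with φ hφ
    have h0 := J_nonneg hr n hφ.1 hφ.2
    have h1 := J_le hr (n := n) (by omega) hφ.1 hφ.2
    have hn1 : (1:ℝ) ≤ (n:ℝ) := by exact_mod_cast (by omega : 1 ≤ n)
    have hJ1 : Jf r n φ ≤ 1 := le_trans h1 (by rw [div_le_one (by linarith)]; linarith)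
    have hs : |Real.sin φ| ≤ 1 := Real.abs_sin_le_one φ
    rw [Real.norm_eq_abs, abs_mul, abs_pow]
    have hJa : |Jf r n φ| ≤ 1 := abs_le.mpr ⟨by linarith, hJ1⟩
    calc |Real.sin φ| ^ k * |Jf r n φ| ≤ 1 ^ k * 1 :=
        mul_le_mul (pow_le_pow_left₀ (abs_nonneg _) hs k) hJa (abs_nonneg _) (by norm_num)
    _ = 1 := by norm_num

end Stmt12Aux

/-- for every `r > 0` the constant `c_r = M(π/4,r)/(2(1+r))` is positive
and `c_r ≤ E(n,r) ≤ 3/2` for all `n ≥ 2`. -/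
theorem statement12 (r : ℝ) (hr : 0 < r) :
    0 < Mfun (Real.pi / 4) r / (2 * (1 + r)) ∧
    ∀ n : ℕ, 2 ≤ n →
      Mfun (Real.pi / 4) r / (2 * (1 + r)) ≤ Econst n r ∧ Econst n r ≤ 3 / 2 := by
  have hpi := Real.pi_pos
  have hM4 := Stmt12Aux.Mfun_pos (s := r) hr.le
  refine ⟨by positivity, ?_⟩
  intro n hn
  have hn1 : (2:ℝ) ≤ (n:ℝ) := by exact_mod_cast hn
  have hnk : (n:ℝ) - 2 = ((n - 2 : ℕ):ℝ) := by
    rw [Nat.cast_sub hn]; norm_num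
  have hc2k : 0 < c2 ((n:ℝ) - 2) := by rw [hnk]; exact Stmt12Aux.c2_pos (Nat.cast_nonneg _)
  have hsin_int : ∫ φ in (0:ℝ)..Real.pi, Real.sin φ ^ (n-2) = c2 ((n:ℝ)-2) := by
    rw [hnk]; exact Stmt12Aux.sin_pow_int (n-2)
  have hsin_half : ∫ φ in (0:ℝ)..(Real.pi/2), Real.sin φ ^ (n-2) = c2 ((n:ℝ)-2) / 2 := by
    rw [hnk]; exact Stmt12Aux.sin_pow_half (n-2)
  have hE : Econst n r = ((n:ℝ) / c2 ((n:ℝ) - 2)) *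
      ∫ φ in (0:ℝ)..Real.pi, Real.sin φ ^ (n-2) * Stmt12Aux.Jf r n φ := rfl
  have hII := Stmt12Aux.outer_ii hr hn (n-2)
  have hsk := Real.continuous_sin.pow (n-2)
  have hndiv : 0 ≤ (n:ℝ) / c2 ((n:ℝ)-2) := div_nonneg (by positivity) hc2k.le
  constructor
  · -- lower bound
    have hIIa : IntervalIntegrable (fun φ => Real.sin φ ^ (n-2) * Stmt12Aux.Jf r n φ)
        volume 0 (Real.pi/2) := by
      apply hII.mono_set
      rw [Set.uIcc_of_le (by linarith), Set.uIcc_of_le hpi.le]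
      exact Set.Icc_subset_Icc le_rfl (by linarith)
    have hIIb : IntervalIntegrable (fun φ => Real.sin φ ^ (n-2) * Stmt12Aux.Jf r n φ)
        volume (Real.pi/2) Real.pi := by
      apply hII.mono_set
      rw [Set.uIcc_of_le (by linarith), Set.uIcc_of_le hpi.le]
      exact Set.Icc_subset_Icc (by linarith) le_rfl
    have hsplitΦ : (∫ φ in (0:ℝ)..Real.pi, Real.sin φ ^ (n-2) * Stmt12Aux.Jf r n φ)
        = (∫ φ in (0:ℝ)..(Real.pi/2), Real.sin φ ^ (n-2) * Stmt12Aux.Jf r n φ)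
          + ∫ φ in (Real.pi/2)..Real.pi, Real.sin φ ^ (n-2) * Stmt12Aux.Jf r n φ :=
      (intervalIntegral.integral_add_adjacent_intervals hIIa hIIb).symm
    have hpos2 : 0 ≤ ∫ φ in (Real.pi/2)..Real.pi, Real.sin φ ^ (n-2) * Stmt12Aux.Jf r n φ := by
      apply intervalIntegral.integral_nonneg_of_ae_restrict (by linarith)
      filter_upwards [Stmt12Aux.ae_Ioo (Real.pi/2) Real.pi] with φ hφ
      have h0 := Stmt12Aux.J_nonneg hr n (by linarith [hφ.1]) hφ.2
      have hs : 0 ≤ Real.sin φ ^ (n-2) :=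
        pow_nonneg (Real.sin_nonneg_of_nonneg_of_le_pi (by linarith [hφ.1]) hφ.2.le) _
      exact mul_nonneg hs h0
    have hlow1 : (∫ φ in (0:ℝ)..(Real.pi/2),
          Real.sin φ ^ (n-2) * (Mfun (Real.pi/4) r * (1/((n:ℝ)+r))))
        ≤ ∫ φ in (0:ℝ)..(Real.pi/2), Real.sin φ ^ (n-2) * Stmt12Aux.Jf r n φ := by
      apply intervalIntegral.integral_mono_ae_restrict (by linarith)
        ((hsk.mul continuous_const).intervalIntegrable _ _) hIIa
      filter_upwards [Stmt12Aux.ae_Ioo 0 (Real.pi/2)] with φ hφ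
      have h1 := Stmt12Aux.J_ge hr hn hφ.1 hφ.2.le
      have hs : 0 ≤ Real.sin φ ^ (n-2) :=
        pow_nonneg (Real.sin_nonneg_of_nonneg_of_le_pi hφ.1.le (by linarith [hφ.2])) _
      exact mul_le_mul_of_nonneg_left h1 hs
    have hlow1val : (∫ φ in (0:ℝ)..(Real.pi/2),
          Real.sin φ ^ (n-2) * (Mfun (Real.pi/4) r * (1/((n:ℝ)+r))))
        = (c2 ((n:ℝ)-2)/2) * (Mfun (Real.pi/4) r * (1/((n:ℝ)+r))) := by
      rw [intervalIntegral.integral_mul_const, hsin_half]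
    have hΦge : (c2 ((n:ℝ)-2)/2) * (Mfun (Real.pi/4) r * (1/((n:ℝ)+r)))
        ≤ ∫ φ in (0:ℝ)..Real.pi, Real.sin φ ^ (n-2) * Stmt12Aux.Jf r n φ := by
      rw [hsplitΦ, ← hlow1val]; linarith
    have step := mul_le_mul_of_nonneg_left hΦge hndiv
    have heq : ((n:ℝ)/c2 ((n:ℝ)-2)) * ((c2 ((n:ℝ)-2)/2) * (Mfun (Real.pi/4) r * (1/((n:ℝ)+r))))
        = (n:ℝ) * Mfun (Real.pi/4) r / (2*((n:ℝ)+r)) := by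
      have hne1 : c2 ((n:ℝ)-2) ≠ 0 := hc2k.ne'
      have hne2 : (n:ℝ) + r ≠ 0 := by positivity
      field_simp
    have hfin : Mfun (Real.pi/4) r / (2*(1+r))
        ≤ (n:ℝ) * Mfun (Real.pi/4) r / (2*((n:ℝ)+r)) := by
      rw [div_le_div_iff₀ (by positivity) (by positivity)]
      nlinarith [mul_nonneg (mul_nonneg hM4.le hr.le) (by linarith : (0:ℝ) ≤ (n:ℝ) - 1)]
    rw [hE]
    calc Mfun (Real.pi/4) r / (2*(1+r)) ≤ (n:ℝ) * Mfun (Real.pi/4) r / (2*((n:ℝ)+r)) := hfin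
    _ = ((n:ℝ)/c2 ((n:ℝ)-2)) * ((c2 ((n:ℝ)-2)/2) * (Mfun (Real.pi/4) r * (1/((n:ℝ)+r)))) :=
        heq.symm
    _ ≤ _ := step
  · -- upper bound
    have hmono : (∫ φ in (0:ℝ)..Real.pi, Real.sin φ ^ (n-2) * Stmt12Aux.Jf r n φ)
        ≤ ∫ φ in (0:ℝ)..Real.pi, Real.sin φ ^ (n-2) * (1/(n:ℝ)) := by
      apply intervalIntegral.integral_mono_ae_restrict hpi.le hII
        ((hsk.mul continuous_const).intervalIntegrable _ _)
      filter_upwards [Stmt12Aux.ae_Ioo 0 Real.pi] with φ hφ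
      have h1 := Stmt12Aux.J_le hr (n := n) (by omega) hφ.1 hφ.2
      have hs : 0 ≤ Real.sin φ ^ (n-2) :=
        pow_nonneg (Real.sin_nonneg_of_nonneg_of_le_pi hφ.1.le hφ.2.le) _
      exact mul_le_mul_of_nonneg_left h1 hs
    have hval : (∫ φ in (0:ℝ)..Real.pi, Real.sin φ ^ (n-2) * (1/(n:ℝ)))
        = c2 ((n:ℝ)-2) * (1/(n:ℝ)) := by
      rw [intervalIntegral.integral_mul_const, hsin_int]
    rw [hE]
    calc ((n:ℝ) / c2 ((n:ℝ) - 2)) *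
          ∫ φ in (0:ℝ)..Real.pi, Real.sin φ ^ (n-2) * Stmt12Aux.Jf r n φ
        ≤ ((n:ℝ)/c2 ((n:ℝ)-2)) * (c2 ((n:ℝ)-2) * (1/(n:ℝ))) := by
          apply mul_le_mul_of_nonneg_left ?_ hndiv
          rw [← hval]; exact hmono
    _ = 1 := by field_simp
    _ ≤ 3/2 := by norm_num
end

section
/- There exists a constant c > 0, independent of r, such that for all reals r > 0: c/(r+1)² ≤ E(2,r) ≤ 1/√(r+1). -/
open MeasureTheory Real Set Filter

noncomputable section Aux14

open intervalIntegral

namespace Stmt14Aux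

def CrF (r a : ℝ) : ℝ := ∫ θ in a..(Real.pi / 2), Real.cos θ ^ r

variable {r : ℝ}

lemma contf (hr : 0 < r) : Continuous fun θ : ℝ => Real.cos θ ^ r := by
  rw [continuous_iff_continuousAt]
  exact fun x => (Real.continuousAt_rpow_const _ _ (Or.inr hr.le)).comp
    Real.continuous_cos.continuousAt

lemma intf (hr : 0 < r) (a b : ℝ) :
    IntervalIntegrable (fun θ : ℝ => Real.cos θ ^ r) volume a b :=
  (contf hr).intervalIntegrable a b

lemma contCr (hr : 0 < r) : Continuous (CrF r) := by
  have h : CrF r = fun a => -∫ θ in (Real.pi/2)..a, Real.cos θ ^ r := by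
    funext a; rw [CrF, intervalIntegral.integral_symm]
  rw [h]
  exact (intervalIntegral.continuous_primitive (intf hr) _).neg

lemma Cr_nonneg (hr : 0 < r) {a : ℝ} (h1 : -(π/2) ≤ a) (h2 : a ≤ π/2) :
    0 ≤ CrF r a := by
  apply intervalIntegral.integral_nonneg h2
  intro u hu
  exact Real.rpow_nonneg (Real.cos_nonneg_of_mem_Icc ⟨le_trans h1 hu.1, hu.2⟩) r

lemma Cr_anti (hr : 0 < r) {a b : ℝ} (h1 : -(π/2) ≤ a) (hab : a ≤ b) (h2 : b ≤ π/2) :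
    CrF r b ≤ CrF r a := by
  have hsplit := intervalIntegral.integral_add_adjacent_intervals (intf hr a b) (intf hr b (π/2))
  have hpos : 0 ≤ ∫ θ in a..b, Real.cos θ ^ r := by
    apply intervalIntegral.integral_nonneg hab
    intro u hu
    exact Real.rpow_nonneg (Real.cos_nonneg_of_mem_Icc ⟨le_trans h1 hu.1, le_trans hu.2 h2⟩) r
  rw [CrF, CrF]
  linarith [hsplit]

lemma Cr_refl (hr : 0 < r) (y : ℝ) :
    (∫ θ in (-(π/2))..y, Real.cos θ ^ r) = CrF r (-y) := by
  have h := intervalIntegral.integral_comp_neg (a := -y) (b := π/2)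
      (f := fun θ : ℝ => Real.cos θ ^ r)
  simp only [Real.cos_neg, neg_neg] at h
  rw [CrF, ← h]

lemma Cr_add (hr : 0 < r) (y : ℝ) : CrF r y + CrF r (-y) = c2 r := by
  rw [← Cr_refl hr y, c2, CrF, add_comm]
  exact intervalIntegral.integral_add_adjacent_intervals (intf hr _ y) (intf hr y _)

lemma Cr_abs_le (hr : 0 < r) {x : ℝ} (hx : |x| ≤ 2*π) : |CrF r x| ≤ 3*π := by
  have hb : ∀ θ ∈ Set.uIoc x (π/2), ‖Real.cos θ ^ r‖ ≤ 1 := by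
    intro θ _
    rw [Real.norm_eq_abs]
    calc |Real.cos θ ^ r| ≤ |Real.cos θ| ^ r := Real.abs_rpow_le_abs_rpow _ _
    _ ≤ 1 := Real.rpow_le_one (abs_nonneg _) (Real.abs_cos_le_one θ) hr.le
  have := intervalIntegral.norm_integral_le_of_norm_le_const hb
  rw [CrF, ← Real.norm_eq_abs]
  refine this.trans ?_
  have hpi := Real.pi_pos
  rw [abs_sub_comm]
  have : |x - π/2| ≤ |x| + π/2 := by
    have h1 : |x - π/2| ≤ |x| + |π/2| := abs_sub _ _
    have h2 : |π/2| = π/2 := abs_of_pos (by positivity)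
    linarith
  nlinarith [abs_nonneg x]

lemma c2_le_pi (hr : 0 < r) : c2 r ≤ π := by
  have hpi := Real.pi_pos
  have h : (∫ θ in (-(π/2))..(π/2), Real.cos θ ^ r) ≤ ∫ _ in (-(π/2))..(π/2), (1:ℝ) := by
    apply intervalIntegral.integral_mono_on (by linarith) (intf hr _ _)
      intervalIntegrable_const
    intro x hx
    exact Real.rpow_le_one (Real.cos_nonneg_of_mem_Icc hx) (Real.cos_le_one x) hr.le
  rw [c2]
  refine h.trans ?_
  rw [intervalIntegral.integral_const, smul_eq_mul, mul_one]
  linarith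

def Lc (n : ℕ) : ℝ := ∫ x in (0:ℝ)..(π/2), Real.cos x ^ n

lemma Lc_zero : Lc 0 = π/2 := by simp [Lc]

lemma Lc_one : Lc 1 = 1 := by simp [Lc]

lemma Lc_rec (n : ℕ) : Lc (n+2) = (n+1)/(n+2) * Lc n := by
  rw [Lc, integral_cos_pow n]
  simp [Real.cos_pi_div_two, Real.sin_zero, Lc]

lemma Lc_nonneg (n : ℕ) : 0 ≤ Lc n := by
  apply intervalIntegral.integral_nonneg (by positivity)
  intro u hu
  exact pow_nonneg (Real.cos_nonneg_of_mem_Icc ⟨by linarith [hu.1, Real.pi_pos], hu.2⟩) n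

lemma Lc_succ_le (n : ℕ) : Lc (n+1) ≤ Lc n := by
  apply intervalIntegral.integral_mono_on (by positivity)
    ((Real.continuous_cos.pow _).intervalIntegrable _ _)
    ((Real.continuous_cos.pow _).intervalIntegrable _ _)
  intro x hx
  exact pow_le_pow_of_le_one (Real.cos_nonneg_of_mem_Icc ⟨by linarith [hx.1, Real.pi_pos], hx.2⟩)
    (Real.cos_le_one x) (n.le_add_right 1)

lemma Lc_prod (n : ℕ) : ((n:ℝ)+1) * (Lc n * Lc (n+1)) = π/2 := by
  induction n with
  | zero => simp [Lc_zero, Lc_one]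
  | succ k ih =>
      have h := Lc_rec k
      push_cast
      push_cast at ih
      rw [show k+1+1 = k+2 from rfl, h]
      have hk : ((k:ℝ)+2) ≠ 0 := by positivity
      field_simp at ih ⊢
      nlinarith [ih]

lemma Lc_ge (n : ℕ) : Real.sqrt (π/(2*((n:ℝ)+1))) ≤ Lc n := by
  have h1 : Lc n * Lc (n+1) = π/(2*((n:ℝ)+1)) := by
    have := Lc_prod n
    field_simp
    linarith [Lc_prod n]
  have h2 : π/(2*((n:ℝ)+1)) ≤ Lc n ^ 2 := by
    rw [← h1, sq]
    exact mul_le_mul_of_nonneg_left (Lc_succ_le n) (Lc_nonneg n)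
  calc Real.sqrt (π/(2*((n:ℝ)+1))) ≤ Real.sqrt (Lc n ^ 2) := Real.sqrt_le_sqrt h2
  _ = Lc n := by rw [Real.sqrt_sq (Lc_nonneg n)]

lemma halfc2 (hr : 0 < r) : c2 r = 2 * ∫ x in (0:ℝ)..(π/2), Real.cos x ^ r := by
  have h0 : (∫ θ in (-(π/2))..(0:ℝ), Real.cos θ ^ r) = CrF r 0 := by
    have := Cr_refl hr 0; simpa using this
  have hsplit := intervalIntegral.integral_add_adjacent_intervals
    (intf hr (-(π/2)) 0) (intf hr 0 (π/2))
  rw [c2, ← hsplit, h0, CrF]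
  ring

lemma cospow_mono_exp (hr : 0 < r) {s : ℝ} (hs : 0 < s) (hrs : r ≤ s) {x : ℝ}
    (hx : x ∈ Icc (0:ℝ) (π/2)) : Real.cos x ^ s ≤ Real.cos x ^ r := by
  have hc : 0 ≤ Real.cos x := Real.cos_nonneg_of_mem_Icc
    ⟨by linarith [hx.1, Real.pi_pos], hx.2⟩
  rcases eq_or_lt_of_le hc with h | h
  · rw [← h, Real.zero_rpow hr.ne', Real.zero_rpow hs.ne']
  · exact Real.rpow_le_rpow_of_exponent_ge h (Real.cos_le_one x) hrs

lemma c2_lower (hr : 0 < r) : 2 / Real.sqrt (r+1) ≤ c2 r := by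
  have hs1 : (1:ℝ) ≤ Real.sqrt (r+1) := by
    have := Real.sqrt_le_sqrt (show (1:ℝ) ≤ r+1 by linarith)
    rwa [Real.sqrt_one] at this
  rcases le_or_gt r 1 with hr1 | hr1
  · -- small r : compare with cos^1
    have h1 : (1:ℝ) ≤ ∫ x in (0:ℝ)..(π/2), Real.cos x ^ r := by
      have hmono : (∫ x in (0:ℝ)..(π/2), Real.cos x) ≤ ∫ x in (0:ℝ)..(π/2), Real.cos x ^ r := by
        apply intervalIntegral.integral_mono_on (by positivity)
          (Real.continuous_cos.intervalIntegrable _ _) (intf hr _ _)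
        intro x hx
        have := cospow_mono_exp hr one_pos hr1 hx
        rwa [Real.rpow_one] at this
      rw [integral_cos] at hmono
      simpa using hmono
    have h2 : (2:ℝ) / Real.sqrt (r+1) ≤ 2 := by
      rw [div_le_iff₀ (by linarith)]; linarith
    rw [halfc2 hr]; linarith
  · -- large r : compare with cos^n, n = ceil r
    set n : ℕ := ⌈r⌉₊ with hn
    have hrn : r ≤ (n:ℝ) := Nat.le_ceil r
    have hnr : (n:ℝ) < r + 1 := Nat.ceil_lt_add_one (by linarith)
    have hn0 : 0 < (n:ℝ) := lt_of_lt_of_le (by linarith) hrn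
    have h1 : Lc n ≤ ∫ x in (0:ℝ)..(π/2), Real.cos x ^ r := by
      apply intervalIntegral.integral_mono_on (by positivity)
        ((Real.continuous_cos.pow _).intervalIntegrable _ _) (intf hr _ _)
      intro x hx
      have := cospow_mono_exp hr hn0 hrn hx
      rwa [Real.rpow_natCast] at this
    have h2 : Real.sqrt (π/(2*((n:ℝ)+1))) ≤ Lc n := Lc_ge n
    have h3 : 1/(r+1) ≤ π/(2*((n:ℝ)+1)) := by
      rw [div_le_div_iff₀ (by linarith) (by positivity)]
      nlinarith [Real.pi_gt_three]
    have h4 : Real.sqrt (1/(r+1)) ≤ Real.sqrt (π/(2*((n:ℝ)+1))) := Real.sqrt_le_sqrt h3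
    have h5 : Real.sqrt (1/(r+1)) = 1 / Real.sqrt (r+1) := by
      rw [one_div, one_div, Real.sqrt_inv]
    rw [halfc2 hr]
    rw [h5] at h4
    have : 2 * (1 / Real.sqrt (r+1)) ≤ 2 * Lc n := by linarith
    calc 2 / Real.sqrt (r+1) = 2 * (1/Real.sqrt (r+1)) := by ring
    _ ≤ 2 * Lc n := this
    _ ≤ 2 * ∫ x in (0:ℝ)..(π/2), Real.cos x ^ r := by linarith

lemma c2_pos (hr : 0 < r) : 0 < c2 r :=
  lt_of_lt_of_le (by positivity) (c2_lower hr)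

/-- FTC : `∫_0^{π/2} sin·cos^r = 1/(r+1)`. -/
lemma sin_cospow_int (hr : 0 < r) :
    (∫ θ in (0:ℝ)..(π/2), Real.sin θ * Real.cos θ ^ r) = 1/(r+1) := by
  have hd : ∀ x ∈ Set.uIcc (0:ℝ) (π/2),
      HasDerivAt (fun θ => -(Real.cos θ ^ (r+1))/(r+1)) (Real.sin x * Real.cos x ^ r) x := by
    intro x _
    have h1 : HasDerivAt Real.cos (-Real.sin x) x := Real.hasDerivAt_cos x
    have h2 : HasDerivAt (fun y : ℝ => y ^ (r+1))
        ((r+1) * Real.cos x ^ (r+1-1)) (Real.cos x) :=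
      Real.hasDerivAt_rpow_const (Or.inr (by linarith))
    have h3 := (h2.comp x h1)
    have h4 := (h3.div_const (r+1)).neg
    have h5 : r + 1 ≠ 0 := by linarith
    have h4' : HasDerivAt (fun θ => -(Real.cos θ ^ (r+1))/(r+1))
        (-((r + 1) * Real.cos x ^ (r + 1 - 1) * -Real.sin x / (r + 1))) x := by
      refine h4.congr_of_eventuallyEq (Filter.Eventually.of_forall fun θ => ?_)
      simp [Function.comp, neg_div]
    convert h4' using 1
    rw [show r + 1 - 1 = r by ring]
    field_simp
  have hc : IntervalIntegrable (fun θ => Real.sin θ * Real.cos θ ^ r) volume 0 (π/2) :=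
    (Real.continuous_sin.mul (contf hr)).intervalIntegrable _ _
  rw [intervalIntegral.integral_eq_sub_of_hasDerivAt hd hc]
  rw [Real.cos_pi_div_two, Real.cos_zero, Real.zero_rpow (by linarith), Real.one_rpow]
  ring

/-- `∫_0^{π/2} θ cos^r θ dθ` bounds. -/
lemma theta_cospow_lb (hr : 0 < r) :
    1/(r+1) ≤ ∫ θ in (0:ℝ)..(π/2), θ * Real.cos θ ^ r := by
  rw [← sin_cospow_int hr]
  apply intervalIntegral.integral_mono_on (by positivity)
    ((Real.continuous_sin.mul (contf hr)).intervalIntegrable _ _)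
    ((continuous_id.mul (contf hr)).intervalIntegrable _ _)
  intro x hx
  have hc : 0 ≤ Real.cos x ^ r := Real.rpow_nonneg
    (Real.cos_nonneg_of_mem_Icc ⟨by linarith [hx.1, Real.pi_pos], hx.2⟩) r
  exact mul_le_mul_of_nonneg_right (Real.sin_le hx.1) hc

lemma theta_cospow_ub (hr : 0 < r) :
    (∫ θ in (0:ℝ)..(π/2), θ * Real.cos θ ^ r) ≤ (π/2) * (1/(r+1)) := by
  rw [← sin_cospow_int hr, ← intervalIntegral.integral_const_mul]
  apply intervalIntegral.integral_mono_on (by positivity)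
    ((continuous_id.mul (contf hr)).intervalIntegrable _ _)
    ((continuous_const.mul (Real.continuous_sin.mul (contf hr))).intervalIntegrable _ _)
  intro x hx
  have hc : 0 ≤ Real.cos x ^ r := Real.rpow_nonneg
    (Real.cos_nonneg_of_mem_Icc ⟨by linarith [hx.1, Real.pi_pos], hx.2⟩) r
  have hs : x ≤ π/2 * Real.sin x := by
    have h := Real.mul_le_sin hx.1 hx.2
    have hpi := Real.pi_pos
    rw [div_mul_eq_mul_div, div_le_iff₀ hpi] at h
    nlinarith
  calc x * Real.cos x ^ r ≤ (π/2 * Real.sin x) * Real.cos x ^ r :=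
        mul_le_mul_of_nonneg_right hs hc
  _ = π/2 * (Real.sin x * Real.cos x ^ r) := by ring

/-- Integration by parts : `∫_0^{π/2} CrF r ψ dψ = ∫_0^{π/2} θ cos^r θ dθ`. -/
lemma Cr_parts (hr : 0 < r) :
    (∫ ψ in (0:ℝ)..(π/2), CrF r ψ) = ∫ θ in (0:ℝ)..(π/2), θ * Real.cos θ ^ r := by
  have hCr : ∀ x : ℝ, HasDerivAt (CrF r) (-(Real.cos x ^ r)) x := by
    intro x
    have h1 : HasDerivAt (fun y => ∫ θ in (π/2)..y, Real.cos θ ^ r) (Real.cos x ^ r) x :=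
      intervalIntegral.integral_hasDerivAt_right (intf hr _ _)
        ((contf hr).stronglyMeasurableAtFilter _ _) (contf hr).continuousAt
    have h2 := h1.neg
    have heq : CrF r = fun y => -∫ θ in (π/2)..y, Real.cos θ ^ r := by
      funext y; rw [CrF, intervalIntegral.integral_symm]
    rw [heq]
    exact h2
  have hu : ∀ x ∈ Set.uIcc (0:ℝ) (π/2), HasDerivAt (CrF r) (-(Real.cos x ^ r)) x :=
    fun x _ => hCr x
  have hv : ∀ x ∈ Set.uIcc (0:ℝ) (π/2), HasDerivAt (fun y : ℝ => y) 1 x :=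
    fun x _ => hasDerivAt_id x
  have hu' : IntervalIntegrable (fun x => -(Real.cos x ^ r)) volume 0 (π/2) :=
    ((contf hr).neg).intervalIntegrable _ _
  have hv' : IntervalIntegrable (fun _ : ℝ => (1:ℝ)) volume 0 (π/2) :=
    intervalIntegrable_const
  have H := intervalIntegral.integral_mul_deriv_eq_deriv_mul hu hv hu' hv'
  have hCrpi : CrF r (π/2) = 0 := intervalIntegral.integral_same
  simp only [mul_one, hCrpi, zero_mul, mul_zero, sub_zero, zero_sub] at H
  rw [H]
  rw [← intervalIntegral.integral_neg]
  congr 1; funext x; ring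

/-- Bounds on `alphaF`. -/
lemma alpha_mem (t φ : ℝ) (hφ : φ ∈ Ioo 0 π) (ht : t ∈ Icc (0:ℝ) 1) :
    φ - π/2 ≤ alphaF t φ ∧ alphaF t φ ≤ φ/2 := by
  have hs : 0 < Real.sin φ := Real.sin_pos_of_pos_of_lt_pi hφ.1 hφ.2
  have hpi := Real.pi_pos
  constructor
  · have hlt1 : -(π/2) < φ - π/2 := by linarith [hφ.1]
    have hlt2 : φ - π/2 < π/2 := by linarith [hφ.2]
    have htan : Real.tan (φ - π/2) = -Real.cos φ / Real.sin φ := by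
      rw [Real.tan_eq_sin_div_cos, Real.sin_sub_pi_div_two, Real.cos_sub_pi_div_two]
    have hle : -Real.cos φ / Real.sin φ ≤ (t - Real.cos φ) / Real.sin φ :=
      (div_le_div_iff_of_pos_right hs).mpr (by linarith [ht.1])
    have hmono := Real.arctan_strictMono.monotone hle
    rw [← htan, Real.arctan_tan hlt1 hlt2] at hmono
    exact hmono
  · have hlt1 : -(π/2) < φ/2 := by linarith [hφ.1]
    have hlt2 : φ/2 < π/2 := by linarith [hφ.2]
    have hcos2 : 0 < Real.cos (φ/2) := Real.cos_pos_of_mem_Ioo ⟨hlt1, hlt2⟩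
    have hsin2 : 0 < Real.sin (φ/2) := Real.sin_pos_of_pos_of_lt_pi (by linarith [hφ.1]) (by linarith)
    have hc2 : Real.cos φ = 1 - 2 * Real.sin (φ/2)^2 := by
      have h := Real.cos_two_mul (φ/2)
      have hp := Real.sin_sq_add_cos_sq (φ/2)
      rw [show 2*(φ/2) = φ by ring] at h
      linarith
    have hs2 : Real.sin φ = 2 * Real.sin (φ/2) * Real.cos (φ/2) := by
      have h := Real.sin_two_mul (φ/2)
      rw [show 2*(φ/2) = φ by ring] at h
      linarith
    have hle : (t - Real.cos φ) / Real.sin φ ≤ Real.tan (φ/2) := by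
      rw [Real.tan_eq_sin_div_cos, div_le_div_iff₀ hs hcos2]
      nlinarith [ht.2, hcos2, hsin2]
    have hmono := Real.arctan_strictMono.monotone hle
    rw [Real.arctan_tan hlt1 hlt2] at hmono
    exact hmono

/-- The key identity. -/
lemma Gident (hr : 0 < r) (t φ : ℝ) :
    1 + t ^ r - Fr r t φ
      = (CrF r (φ - alphaF t φ) + t ^ r * CrF r (alphaF t φ)) / c2 r := by
  have hc2 := c2_pos hr
  have h1 : (∫ θ in (-(π/2))..(alphaF t φ), Real.cos θ ^ r) = c2 r - CrF r (alphaF t φ) := by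
    have ha := Cr_add hr (alphaF t φ)
    rw [Cr_refl hr]
    linarith
  have h2 : (∫ θ in (alphaF t φ - φ)..(π/2), Real.cos θ ^ r) = c2 r - CrF r (φ - alphaF t φ) := by
    have ha := Cr_add hr (alphaF t φ - φ)
    rw [neg_sub] at ha
    have : (∫ θ in (alphaF t φ - φ)..(π/2), Real.cos θ ^ r) = CrF r (alphaF t φ - φ) := rfl
    rw [this]
    linarith
  rw [Fr, h1, h2]
  field_simp
  ring

lemma cont_inner (hr : 0 < r) {φ : ℝ} (hφs : Real.sin φ ≠ 0) :
    Continuous fun t : ℝ =>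
      t * ((CrF r (φ - alphaF t φ) + t ^ r * CrF r (alphaF t φ)) / c2 r) := by
  have halpha : Continuous fun t : ℝ => alphaF t φ := by
    have : Continuous fun t : ℝ => (t - Real.cos φ) / Real.sin φ :=
      (continuous_id.sub continuous_const).div_const _
    exact Real.continuous_arctan.comp this
  have hrpow : Continuous fun t : ℝ => t ^ r := by
    rw [continuous_iff_continuousAt]
    exact fun x => Real.continuousAt_rpow_const _ _ (Or.inr hr.le)
  exact continuous_id.mul ((((contCr hr).comp (continuous_const.sub halpha)).add
    (hrpow.mul ((contCr hr).comp halpha))).div_const _)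

lemma t_rpow_succ (hr : 0 < r) {t : ℝ} (ht : 0 ≤ t) : t * t ^ r = t ^ (r+1) := by
  rcases eq_or_lt_of_le ht with h | h
  · rw [← h]
    rw [Real.zero_rpow hr.ne', Real.zero_rpow (by linarith : r + 1 ≠ 0), mul_zero]
  · rw [Real.rpow_add_one h.ne', mul_comm]

lemma integral_t_rpow_succ (hr : 0 < r) :
    (∫ t in (0:ℝ)..1, t ^ (r+1)) = 1/(r+2) := by
  rw [integral_rpow (Or.inl (by linarith))]
  rw [Real.one_rpow, Real.zero_rpow (by linarith)]
  norm_num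
  ring_nf

lemma cont_rpow1 (hr : 0 < r) : Continuous fun t : ℝ => t ^ (r+1) := by
  rw [continuous_iff_continuousAt]
  exact fun x => Real.continuousAt_rpow_const _ _ (Or.inr (by linarith))

/-- inner upper bound -/
lemma inner_upper (hr : 0 < r) {φ : ℝ} (hφ : φ ∈ Ioo 0 π) :
    (∫ t in (0:ℝ)..1, t * (1 + t ^ r - Fr r t φ))
      ≤ (CrF r (φ/2) * (1/2) + CrF r (φ - π/2) * (1/(r+2))) / c2 r := by
  have hc2 := c2_pos hr
  have hpi := Real.pi_pos
  have hφs : Real.sin φ ≠ 0 := (Real.sin_pos_of_pos_of_lt_pi hφ.1 hφ.2).ne'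
  have hEq : (fun t : ℝ => t * (1 + t ^ r - Fr r t φ))
      = fun t : ℝ => t * ((CrF r (φ - alphaF t φ) + t ^ r * CrF r (alphaF t φ)) / c2 r) := by
    funext t; rw [Gident hr]
  rw [hEq]
  have hcontR : Continuous fun t : ℝ =>
      (t * CrF r (φ/2) + t ^ (r+1) * CrF r (φ - π/2)) / c2 r :=
    ((continuous_id'.mul continuous_const).add
      ((cont_rpow1 hr).mul continuous_const)).div_const _
  have hstep : (∫ t in (0:ℝ)..1,
      t * ((CrF r (φ - alphaF t φ) + t ^ r * CrF r (alphaF t φ)) / c2 r))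
      ≤ ∫ t in (0:ℝ)..1, (t * CrF r (φ/2) + t ^ (r+1) * CrF r (φ - π/2)) / c2 r := by
    apply intervalIntegral.integral_mono_on zero_le_one
      ((cont_inner hr hφs).intervalIntegrable _ _)
      (hcontR.intervalIntegrable _ _)
    intro t ht
    obtain ⟨ha1, ha2⟩ := alpha_mem t φ hφ ht
    have hb1 : CrF r (φ - alphaF t φ) ≤ CrF r (φ/2) :=
      Cr_anti hr (by linarith [hφ.1]) (by linarith) (by linarith)
    have hb2 : CrF r (alphaF t φ) ≤ CrF r (φ - π/2) :=
      Cr_anti hr (by linarith [hφ.1]) ha1 (by linarith [hφ.2])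
    have htr : (0:ℝ) ≤ t ^ r := Real.rpow_nonneg ht.1 r
    have hnum : t * (CrF r (φ - alphaF t φ) + t ^ r * CrF r (alphaF t φ))
        ≤ t * CrF r (φ/2) + t ^ (r+1) * CrF r (φ - π/2) := by
      have e1 : t * CrF r (φ - alphaF t φ) ≤ t * CrF r (φ/2) :=
        mul_le_mul_of_nonneg_left hb1 ht.1
      have e2 : (t * t ^ r) * CrF r (alphaF t φ) ≤ (t * t ^ r) * CrF r (φ - π/2) :=
        mul_le_mul_of_nonneg_left hb2 (mul_nonneg ht.1 htr)
      rw [← t_rpow_succ hr ht.1]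
      nlinarith [e1, e2]
    calc t * ((CrF r (φ - alphaF t φ) + t ^ r * CrF r (alphaF t φ)) / c2 r)
        = t * (CrF r (φ - alphaF t φ) + t ^ r * CrF r (alphaF t φ)) / c2 r := by ring
    _ ≤ (t * CrF r (φ/2) + t ^ (r+1) * CrF r (φ - π/2)) / c2 r :=
        (div_le_div_iff_of_pos_right hc2).mpr hnum
  refine hstep.trans_eq ?_
  rw [intervalIntegral.integral_div]
  congr 1
  rw [intervalIntegral.integral_add (f := fun t => t * CrF r (φ/2))
    (g := fun t => t ^ (r+1) * CrF r (φ - π/2))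
    ((continuous_id'.mul continuous_const).intervalIntegrable _ _)
    (((cont_rpow1 hr).mul continuous_const).intervalIntegrable _ _)]
  rw [intervalIntegral.integral_mul_const, intervalIntegral.integral_mul_const]
  rw [integral_id, integral_t_rpow_succ hr]
  ring

/-- inner lower bound -/
lemma inner_lower (hr : 0 < r) {φ : ℝ} (hφ : φ ∈ Ioo 0 π) :
    CrF r (φ/2) * (1/(r+2)) / c2 r
      ≤ ∫ t in (0:ℝ)..1, t * (1 + t ^ r - Fr r t φ) := by
  have hc2 := c2_pos hr
  have hpi := Real.pi_pos
  have hφs : Real.sin φ ≠ 0 := (Real.sin_pos_of_pos_of_lt_pi hφ.1 hφ.2).ne'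
  have hEq : (fun t : ℝ => t * (1 + t ^ r - Fr r t φ))
      = fun t : ℝ => t * ((CrF r (φ - alphaF t φ) + t ^ r * CrF r (alphaF t φ)) / c2 r) := by
    funext t; rw [Gident hr]
  rw [hEq]
  have hcontL : Continuous fun t : ℝ => t ^ (r+1) * CrF r (φ/2) / c2 r :=
    ((cont_rpow1 hr).mul continuous_const).div_const _
  have hstep : (∫ t in (0:ℝ)..1, t ^ (r+1) * CrF r (φ/2) / c2 r)
      ≤ ∫ t in (0:ℝ)..1,
        t * ((CrF r (φ - alphaF t φ) + t ^ r * CrF r (alphaF t φ)) / c2 r) := by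
    apply intervalIntegral.integral_mono_on zero_le_one
      (hcontL.intervalIntegrable _ _)
      ((cont_inner hr hφs).intervalIntegrable _ _)
    intro t ht
    obtain ⟨ha1, ha2⟩ := alpha_mem t φ hφ ht
    have hb1 : 0 ≤ CrF r (φ - alphaF t φ) :=
      Cr_nonneg hr (by linarith [hφ.1]) (by linarith)
    have hb2 : CrF r (φ/2) ≤ CrF r (alphaF t φ) :=
      Cr_anti hr (by linarith [ha1, hφ.1]) ha2 (by linarith [hφ.2])
    have htr : (0:ℝ) ≤ t ^ r := Real.rpow_nonneg ht.1 r
    have hnum : t ^ (r+1) * CrF r (φ/2)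
        ≤ t * (CrF r (φ - alphaF t φ) + t ^ r * CrF r (alphaF t φ)) := by
      have e2 : (t * t ^ r) * CrF r (φ/2) ≤ (t * t ^ r) * CrF r (alphaF t φ) :=
        mul_le_mul_of_nonneg_left hb2 (mul_nonneg ht.1 htr)
      rw [← t_rpow_succ hr ht.1]
      nlinarith [e2, mul_nonneg ht.1 hb1]
    calc t ^ (r+1) * CrF r (φ/2) / c2 r
        ≤ t * (CrF r (φ - alphaF t φ) + t ^ r * CrF r (alphaF t φ)) / c2 r :=
        (div_le_div_iff_of_pos_right hc2).mpr hnum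
    _ = t * ((CrF r (φ - alphaF t φ) + t ^ r * CrF r (alphaF t φ)) / c2 r) := by ring
  refine le_trans (le_of_eq ?_) hstep
  rw [intervalIntegral.integral_div, intervalIntegral.integral_mul_const,
    integral_t_rpow_succ hr]
  ring

lemma Jrw (hr : 0 < r) :
    (fun φ : ℝ => ∫ t in (0:ℝ)..1, t * (1 + t ^ r - Fr r t φ))
      = fun φ : ℝ => ∫ t in (0:ℝ)..1,
          t * ((CrF r (φ - alphaF t φ) + t ^ r * CrF r (alphaF t φ)) / c2 r) := by
  funext φ
  apply intervalIntegral.integral_congr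
  intro t _
  dsimp only
  rw [Gident hr]

lemma Jmeas (hr : 0 < r) :
    StronglyMeasurable fun φ : ℝ => ∫ t in (0:ℝ)..1, t * (1 + t ^ r - Fr r t φ) := by
  rw [Jrw hr]
  have hEq : (fun φ : ℝ => ∫ t in (0:ℝ)..1,
      t * ((CrF r (φ - alphaF t φ) + t ^ r * CrF r (alphaF t φ)) / c2 r))
      = fun φ : ℝ => ∫ t in Set.Ioc (0:ℝ) 1,
          t * ((CrF r (φ - alphaF t φ) + t ^ r * CrF r (alphaF t φ)) / c2 r) ∂volume := by
    funext φ
    rw [intervalIntegral.integral_of_le zero_le_one]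
  rw [hEq]
  apply MeasureTheory.StronglyMeasurable.integral_prod_right
    (f := fun (φ t : ℝ) => t * ((CrF r (φ - alphaF t φ) + t ^ r * CrF r (alphaF t φ)) / c2 r))
  apply Measurable.stronglyMeasurable
  have m1 : Measurable fun p : ℝ × ℝ => alphaF p.2 p.1 := by
    apply Real.continuous_arctan.measurable.comp
    exact (measurable_snd.sub (Real.continuous_cos.measurable.comp measurable_fst)).div
      (Real.continuous_sin.measurable.comp measurable_fst)
  have m2 : Measurable fun p : ℝ × ℝ => CrF r (p.1 - alphaF p.2 p.1) :=
    (contCr hr).measurable.comp (measurable_fst.sub m1)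
  have hcontr : Continuous fun t : ℝ => t ^ r := by
    rw [continuous_iff_continuousAt]
    exact fun x => Real.continuousAt_rpow_const _ _ (Or.inr hr.le)
  have m3 : Measurable fun p : ℝ × ℝ => p.2 ^ r := hcontr.measurable.comp measurable_snd
  have m4 : Measurable fun p : ℝ × ℝ => CrF r (alphaF p.2 p.1) :=
    (contCr hr).measurable.comp m1
  exact measurable_snd.mul (((m2.add (m3.mul m4)).div_const _))

lemma Jbound (hr : 0 < r) {φ : ℝ} (hφ : φ ∈ Set.Ioc 0 π) :
    ‖∫ t in (0:ℝ)..1, t * (1 + t ^ r - Fr r t φ)‖ ≤ 6*π/c2 r := by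
  have hc2 := c2_pos hr
  have hpi := Real.pi_pos
  have hEq := congrFun (Jrw hr) φ
  rw [hEq]
  have hb : ∀ t ∈ Set.uIoc (0:ℝ) 1,
      ‖t * ((CrF r (φ - alphaF t φ) + t ^ r * CrF r (alphaF t φ)) / c2 r)‖ ≤ 6*π/c2 r := by
    intro t ht
    rw [Set.uIoc_of_le zero_le_one] at ht
    have hα1 := Real.neg_pi_div_two_lt_arctan ((t - Real.cos φ) / Real.sin φ)
    have hα2 := Real.arctan_lt_pi_div_two ((t - Real.cos φ) / Real.sin φ)
    have hα1' : -(π/2) < alphaF t φ := hα1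
    have hα2' : alphaF t φ < π/2 := hα2
    have hX : |CrF r (φ - alphaF t φ)| ≤ 3*π := by
      apply Cr_abs_le hr
      rw [abs_le]
      constructor <;> linarith [hφ.1, hφ.2]
    have hY : |CrF r (alphaF t φ)| ≤ 3*π := by
      apply Cr_abs_le hr
      rw [abs_le]
      constructor <;> linarith
    have htr : |t ^ r| ≤ 1 := by
      rw [abs_of_nonneg (Real.rpow_nonneg ht.1.le r)]
      exact Real.rpow_le_one ht.1.le ht.2 hr.le
    have hZ : |CrF r (φ - alphaF t φ) + t ^ r * CrF r (alphaF t φ)| ≤ 6*π := by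
      have h1 := abs_add_le (CrF r (φ - alphaF t φ)) (t ^ r * CrF r (alphaF t φ))
      have h2 : |t ^ r * CrF r (alphaF t φ)| ≤ 1 * (3*π) := by
        rw [abs_mul]
        exact mul_le_mul htr hY (abs_nonneg _) zero_le_one
      linarith
    have habs_t : |t| ≤ 1 := abs_le.mpr ⟨by linarith [ht.1], ht.2⟩
    calc ‖t * ((CrF r (φ - alphaF t φ) + t ^ r * CrF r (alphaF t φ)) / c2 r)‖
        = |t| * (|CrF r (φ - alphaF t φ) + t ^ r * CrF r (alphaF t φ)| / c2 r) := by
          rw [Real.norm_eq_abs, abs_mul, abs_div, abs_of_pos hc2]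
    _ ≤ 1 * (6*π / c2 r) :=
        mul_le_mul habs_t ((div_le_div_iff_of_pos_right hc2).mpr hZ)
          (by positivity) zero_le_one
    _ = 6*π/c2 r := one_mul _
  have := intervalIntegral.norm_integral_le_of_norm_le_const hb
  simpa using this
lemma Jint (hr : 0 < r) :
    IntervalIntegrable (fun φ : ℝ => ∫ t in (0:ℝ)..1, t * (1 + t ^ r - Fr r t φ))
      volume 0 π := by
  rw [intervalIntegrable_iff_integrableOn_Ioc_of_le Real.pi_pos.le]
  apply Integrable.mono' (g := fun _ : ℝ => 6*π/c2 r)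
    (integrableOn_const measure_Ioc_lt_top.ne)
    ((Jmeas hr).aestronglyMeasurable)
  exact (ae_restrict_mem measurableSet_Ioc).mono fun φ hφ => Jbound hr hφ

lemma comp_half (hr : 0 < r) :
    (∫ φ in (0:ℝ)..π, CrF r (φ/2)) = 2 * ∫ ψ in (0:ℝ)..(π/2), CrF r ψ := by
  rw [intervalIntegral.integral_comp_div (f := CrF r) (c := 2) two_ne_zero]
  norm_num

lemma comp_shift (hr : 0 < r) :
    (∫ φ in (0:ℝ)..π, CrF r (φ - π/2)) = π * c2 r / 2 := by
  rw [intervalIntegral.integral_comp_sub_right (f := CrF r) (π/2)]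
  have h0 : (0:ℝ) - π/2 = -(π/2) := by ring
  have h1 : π - π/2 = π/2 := by ring
  rw [h0, h1]
  have hneg : (∫ x in (-(π/2))..(π/2), CrF r (-x)) = ∫ x in (-(π/2))..(π/2), CrF r x := by
    rw [intervalIntegral.integral_comp_neg (f := CrF r)]
    norm_num
  have hadd : (∫ x in (-(π/2))..(π/2), (CrF r x + CrF r (-x)))
      = (∫ x in (-(π/2))..(π/2), CrF r x) + ∫ x in (-(π/2))..(π/2), CrF r (-x) :=
    intervalIntegral.integral_add ((contCr hr).intervalIntegrable _ _)
      (((contCr hr).comp continuous_neg).intervalIntegrable _ _)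
  have hconst : (∫ x in (-(π/2))..(π/2), (CrF r x + CrF r (-x))) = π * c2 r := by
    have : (∫ x in (-(π/2))..(π/2), (CrF r x + CrF r (-x)))
        = ∫ _ in (-(π/2))..(π/2), c2 r := by
      apply intervalIntegral.integral_congr
      intro x _
      exact Cr_add hr x
    rw [this, intervalIntegral.integral_const, smul_eq_mul]
    ring
  rw [hneg] at hadd
  linarith

lemma ae_Ioo : ∀ᵐ φ ∂(volume.restrict (Icc (0:ℝ) π)), φ ∈ Ioo (0:ℝ) π := by
  have hfin : (volume : Measure ℝ) ({0, π} : Set ℝ) = 0 :=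
    (Set.toFinite ({0, π} : Set ℝ)).measure_zero _
  have h2 : ∀ᵐ φ : ℝ ∂volume, φ ∉ ({0, π} : Set ℝ) :=
    (MeasureTheory.measure_eq_zero_iff_ae_notMem).mp hfin
  filter_upwards [ae_restrict_mem measurableSet_Icc, ae_restrict_of_ae h2] with φ h1 hne
  simp only [Set.mem_insert_iff, Set.mem_singleton_iff, not_or] at hne
  exact ⟨lt_of_le_of_ne h1.1 (Ne.symm hne.1), lt_of_le_of_ne h1.2 hne.2⟩

lemma outer_upper (hr : 0 < r) :
    (∫ φ in (0:ℝ)..π, ∫ t in (0:ℝ)..1, t * (1 + t ^ r - Fr r t φ))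
      ≤ (∫ θ in (0:ℝ)..(π/2), θ * Real.cos θ ^ r) / c2 r + (π/2) * (1/(r+2)) := by
  have hc2 := c2_pos hr
  have c1 : Continuous fun φ : ℝ => CrF r (φ/2) * (1/2) :=
    ((contCr hr).comp (continuous_id'.div_const 2)).mul continuous_const
  have c2' : Continuous fun φ : ℝ => CrF r (φ - π/2) * (1/(r+2)) :=
    ((contCr hr).comp (continuous_id'.sub continuous_const)).mul continuous_const
  have hcontR : Continuous fun φ : ℝ =>
      (CrF r (φ/2) * (1/2) + CrF r (φ - π/2) * (1/(r+2))) / c2 r :=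
    (c1.add c2').div_const _
  have hmono := intervalIntegral.integral_mono_ae_restrict Real.pi_pos.le (Jint hr)
    (hcontR.intervalIntegrable _ _) (ae_Ioo.mono fun φ hφ => inner_upper hr hφ)
  refine hmono.trans_eq ?_
  rw [intervalIntegral.integral_div]
  rw [intervalIntegral.integral_add
    (c1.intervalIntegrable _ _) (c2'.intervalIntegrable _ _)]
  rw [intervalIntegral.integral_mul_const, intervalIntegral.integral_mul_const]
  rw [comp_half hr, comp_shift hr, Cr_parts hr]
  have h1 : c2 r ≠ 0 := hc2.ne'
  have h2 : r + 2 ≠ 0 := by positivity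
  field_simp
  try exact Or.inl trivial

lemma outer_lower (hr : 0 < r) :
    (∫ θ in (0:ℝ)..(π/2), θ * Real.cos θ ^ r) * (2/((r+2) * c2 r))
      ≤ ∫ φ in (0:ℝ)..π, ∫ t in (0:ℝ)..1, t * (1 + t ^ r - Fr r t φ) := by
  have hc2 := c2_pos hr
  have hcontL : Continuous fun φ : ℝ => CrF r (φ/2) * (1/(r+2)) / c2 r :=
    (((contCr hr).comp (continuous_id'.div_const 2)).mul continuous_const).div_const _
  have hmono := intervalIntegral.integral_mono_ae_restrict Real.pi_pos.le
    (hcontL.intervalIntegrable _ _) (Jint hr)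
    (ae_Ioo.mono fun φ hφ => inner_lower hr hφ)
  refine le_trans (le_of_eq ?_) hmono
  rw [intervalIntegral.integral_div, intervalIntegral.integral_mul_const]
  rw [comp_half hr, Cr_parts hr]
  have h1 : c2 r ≠ 0 := hc2.ne'
  have h2 : r + 2 ≠ 0 := by positivity
  field_simp

lemma c2_zero : c2 0 = π := by
  rw [c2]
  simp [Real.rpow_zero]

lemma Econst_two (r : ℝ) : Econst 2 r
    = (2/π) * ∫ φ in (0:ℝ)..π, ∫ t in (0:ℝ)..1, t * (1 + t ^ r - Fr r t φ) := by
  rw [Econst]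
  norm_num [c2_zero]

theorem statement14' :
    ∃ c : ℝ, 0 < c ∧ ∀ r : ℝ, 0 < r →
      c / (r + 1) ^ 2 ≤ Econst 2 r ∧ Econst 2 r ≤ 1 / Real.sqrt (r + 1) := by
  refine ⟨2/π^2, by positivity, fun r hr => ?_⟩
  have hpi := Real.pi_pos
  have hc2 := c2_pos hr
  have hT1 := theta_cospow_lb hr
  have hT2 := theta_cospow_ub hr
  set T := ∫ θ in (0:ℝ)..(π/2), θ * Real.cos θ ^ r with hT
  set s := Real.sqrt (r+1) with hsdef
  have hs2 : s^2 = r+1 := Real.sq_sqrt (by linarith)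
  have hs1 : 1 ≤ s := by
    have := Real.sqrt_le_sqrt (show (1:ℝ) ≤ r+1 by linarith)
    rwa [Real.sqrt_one] at this
  have hspos : 0 < s := by linarith
  have hc2l := c2_lower hr
  constructor
  · -- lower bound
    rw [Econst_two]
    have hTpos : 0 ≤ T := le_trans (by positivity) hT1
    have h2 : 2/((r+2)*π) ≤ 2/((r+2)*c2 r) := by
      rw [div_le_div_iff₀ (by positivity) (by positivity)]
      nlinarith [c2_le_pi hr]
    have h1 : (1/(r+1)) * (2/((r+2)*π)) ≤ T * (2/((r+2) * c2 r)) :=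
      mul_le_mul hT1 h2 (by positivity) hTpos
    have h3 : (2/π) * ((1/(r+1)) * (2/((r+2)*π)))
        ≤ (2/π) * (∫ φ in (0:ℝ)..π, ∫ t in (0:ℝ)..1, t * (1 + t ^ r - Fr r t φ)) := by
      apply mul_le_mul_of_nonneg_left _ (by positivity)
      exact le_trans h1 (outer_lower hr)
    have h4 : 2/π^2 / (r+1)^2 ≤ (2/π) * ((1/(r+1)) * (2/((r+2)*π))) := by
      have he : (2/π) * ((1/(r+1)) * (2/((r+2)*π))) = 4/(π^2*((r+1)*(r+2))) := by
        field_simp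
        ring
      rw [he, div_div, div_le_div_iff₀ (by positivity) (by positivity)]
      have hπ2 : (0:ℝ) < π^2 := by positivity
      nlinarith [mul_pos hπ2 hr, mul_pos (mul_pos hπ2 hr) hr]
    linarith
  · -- upper bound
    rw [Econst_two]
    have step1 : (2/π) * (∫ φ in (0:ℝ)..π, ∫ t in (0:ℝ)..1, t * (1 + t ^ r - Fr r t φ))
        ≤ (2/π) * (T / c2 r + (π/2) * (1/(r+2))) :=
      mul_le_mul_of_nonneg_left (outer_upper hr) (by positivity)
    have step2 : (2/π) * (T / c2 r + (π/2) * (1/(r+2)))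
        ≤ (2/π) * ((π/2) * (1/(r+1)) / c2 r + (π/2) * (1/(r+2))) := by
      apply mul_le_mul_of_nonneg_left ?_ (by positivity)
      exact add_le_add ((div_le_div_iff_of_pos_right hc2).mpr hT2) le_rfl
    have step3 : (2/π) * ((π/2) * (1/(r+1)) / c2 r + (π/2) * (1/(r+2)))
        = 1/((r+1) * c2 r) + 1/(r+2) := by
      field_simp
    have step4 : 1/((r+1) * c2 r) ≤ 1/(2*s) := by
      apply one_div_le_one_div_of_le (by positivity)
      have h5 : (r+1) * (2/s) ≤ (r+1) * c2 r :=
        mul_le_mul_of_nonneg_left hc2l (by linarith)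
      have h6 : (r+1) * (2/s) = 2*s := by
        rw [← hs2]
        field_simp
      linarith
    have step5 : 1/(2*s) + 1/(r+2) ≤ 1/s := by
      rw [div_add_div _ _ (by positivity) (by positivity : (r:ℝ)+2 ≠ 0),
        div_le_div_iff₀ (by positivity) hspos]
      nlinarith [sq_nonneg (s-1), hs2]
    calc (2/π) * (∫ φ in (0:ℝ)..π, ∫ t in (0:ℝ)..1, t * (1 + t ^ r - Fr r t φ))
        ≤ (2/π) * (T / c2 r + (π/2) * (1/(r+2))) := step1
    _ ≤ (2/π) * ((π/2) * (1/(r+1)) / c2 r + (π/2) * (1/(r+2))) := step2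
    _ = 1/((r+1) * c2 r) + 1/(r+2) := step3
    _ ≤ 1/(2*s) + 1/(r+2) := by linarith [step4]
    _ ≤ 1/s := step5

end Stmt14Aux

end Aux14

/-- there is `c > 0` independent of `r` with
`c/(r+1)² ≤ E(2,r) ≤ 1/√(r+1)` for all `r > 0`. -/
theorem statement14 :
    ∃ c : ℝ, 0 < c ∧ ∀ r : ℝ, 0 < r →
      c / (r + 1) ^ 2 ≤ Econst 2 r ∧ Econst 2 r ≤ 1 / Real.sqrt (r + 1) :=
  Stmt14Aux.statement14'
end
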